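/- arXiv:1309.6141 — 10 statements merged into one kernel-verified Lean document; each statement's English description precedes it below -/
import Mathlib

section
/- Let σ be a random time, t ≥ 0, and ξ a P-integrable random variable. Then P-almost surely, E^P[ξ·1_{σ>t} | G_t] = 1_{σ>t} · E^P[ξ·1_{σ>t} | F_t] / Z_t, where the quotient is interpreted as 0 on the set {Z_t = 0} (the set {σ > t} ∩ {Z_t = 0} is P-null). -/
open MeasureTheory

/-- Auxiliary trace lemma: if every generator of `C` contains `A`, then every set measurable
with respect to `mF ⊔ generateFrom C` coincides on `A` with an `mF`-measurable set. -/
lemma stmt_1_trace {Ω : Type*} (mF : MeasurableSpace Ω) (A : Set Ω)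
    (C : Set (Set Ω)) (hC : ∀ s ∈ C, A ⊆ s) :
    ∀ s : Set Ω, MeasurableSet[mF ⊔ MeasurableSpace.generateFrom C] s →
      ∃ F : Set Ω, MeasurableSet[mF] F ∧ s ∩ A = F ∩ A := by
  intro s hs
  let D : MeasurableSpace Ω :=
    { MeasurableSet' := fun u => ∃ F, MeasurableSet[mF] F ∧ u ∩ A = F ∩ A
      measurableSet_empty := ⟨∅, MeasurableSet.empty, by simp⟩
      measurableSet_compl := by
        rintro u ⟨F, hF, hFA⟩
        refine ⟨Fᶜ, hF.compl, ?_⟩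
        rw [Set.ext_iff] at hFA ⊢
        intro ω
        have := hFA ω
        simp only [Set.mem_inter_iff, Set.mem_compl_iff] at this ⊢
        tauto
      measurableSet_iUnion := by
        intro g hg
        choose F hF hFA using hg
        exact ⟨⋃ i, F i, MeasurableSet.iUnion hF, by
          rw [Set.iUnion_inter, Set.iUnion_inter]; exact Set.iUnion_congr hFA⟩ }
  have hGD : mF ⊔ MeasurableSpace.generateFrom C ≤ D := by
    refine sup_le (fun u hu => ⟨u, hu, rfl⟩) (MeasurableSpace.generateFrom_le ?_)
    intro s' hs'
    exact ⟨Set.univ, MeasurableSet.univ, by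
      rw [Set.univ_inter, Set.inter_eq_right]; exact hC s' hs'⟩
  exact hGD s hs

/-- Let `σ` be a random time, `t ≥ 0`, and `ξ` a `P`-integrable random
variable. Then `P`-almost surely,
`E[ξ·1_{σ>t} | 𝒢 t] = 1_{σ>t} · E[ξ·1_{σ>t} | ℱ t] / Z t`,
where `Z t` is an `ℱ t`-measurable version of `P(σ > t | ℱ t)`, the quotient is
interpreted as `0` where `Z t = 0` (Lean's division by zero), and the set
`{σ > t} ∩ {Z t = 0}` is `P`-null. -/
theorem stmt_1 {Ω : Type*} {m : MeasurableSpace Ω}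
    (P : Measure Ω) [IsProbabilityMeasure P]
    (ℱ : Filtration NNReal m)
    (σ : Ω → ENNReal) (hσ : Measurable σ)
    (t : NNReal) (G : MeasurableSpace Ω)
    (hG : G = (ℱ t : MeasurableSpace Ω) ⊔
      MeasurableSpace.generateFrom
        {s : Set Ω | ∃ r : NNReal, r ≤ t ∧ s = {ω | (r : ENNReal) < σ ω}})
    (Z : Ω → ℝ) (hZmeas : StronglyMeasurable[ℱ t] Z)
    (hZ : Z =ᵐ[P] P[Set.indicator {ω | (t : ENNReal) < σ ω} (fun _ => (1 : ℝ)) | ℱ t])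
    (ξ : Ω → ℝ) (hξ : Integrable ξ P) :
    P {ω | (t : ENNReal) < σ ω ∧ Z ω = 0} = 0 ∧
    P[fun ω => ξ ω * Set.indicator {ω' | (t : ENNReal) < σ ω'} (fun _ => (1 : ℝ)) ω | G]
      =ᵐ[P] fun ω => Set.indicator {ω' | (t : ENNReal) < σ ω'} (fun _ => (1 : ℝ)) ω *
        ((P[fun ω' => ξ ω' * Set.indicator {ω'' | (t : ENNReal) < σ ω''} (fun _ => (1 : ℝ)) ω' | ℱ t]) ω / Z ω) := by
  classical
  subst hG
  have hm : (ℱ t : MeasurableSpace Ω) ≤ m := ℱ.le t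
  set 𝒞 : Set (Set Ω) :=
    {s : Set Ω | ∃ r : NNReal, r ≤ t ∧ s = {ω | (r : ENNReal) < σ ω}} with h𝒞def
  set A : Set Ω := {ω | (t : ENNReal) < σ ω} with hAdef
  have hAmeas : MeasurableSet[m] A := hσ measurableSet_Ioi
  -- the indicator of A
  set χ : Ω → ℝ := A.indicator (fun _ => (1 : ℝ)) with hχdef
  have hχ_int : Integrable χ P := (integrable_const (1 : ℝ)).indicator hAmeas
  set f : Ω → ℝ := fun ω => ξ ω * χ ω with hfdef
  have hf_eq : f = A.indicator ξ := by
    funext ω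
    by_cases hω : ω ∈ A <;>
      simp [hfdef, hχdef, Set.indicator_of_mem, Set.indicator_of_notMem, hω]
  have hf_int : Integrable f P := by rw [hf_eq]; exact hξ.indicator hAmeas
  set h : Ω → ℝ := P[f | ℱ t] with hhdef
  have hh_int : Integrable h P := integrable_condExp
  have hh_sm : StronglyMeasurable[ℱ t] h := stronglyMeasurable_condExp
  haveI : IsFiniteMeasure (P.trim hm) := isFiniteMeasure_trim hm
  -- Part 1: the null set
  have hB : MeasurableSet[ℱ t] {ω | Z ω ≤ 0} := hZmeas.measurable measurableSet_Iic
  have hnullB : P (A ∩ {ω | Z ω ≤ 0}) = 0 := by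
    have h1 : ∫ ω in {ω | Z ω ≤ 0}, Z ω ∂P = ∫ ω in {ω | Z ω ≤ 0}, χ ω ∂P := by
      calc ∫ ω in {ω | Z ω ≤ 0}, Z ω ∂P
          = ∫ ω in {ω | Z ω ≤ 0}, (P[χ | ℱ t]) ω ∂P :=
            setIntegral_congr_ae (hm _ hB) (by filter_upwards [hZ] with ω hω _ using hω)
        _ = ∫ ω in {ω | Z ω ≤ 0}, χ ω ∂P := setIntegral_condExp hm hχ_int hB
    have h2 : ∫ ω in {ω | Z ω ≤ 0}, χ ω ∂P = (P (A ∩ {ω | Z ω ≤ 0})).toReal := by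
      rw [hχdef, setIntegral_indicator hAmeas, setIntegral_const, smul_eq_mul, mul_one,
        Set.inter_comm]
      rfl
    have h3 : ∫ ω in {ω | Z ω ≤ 0}, Z ω ∂P ≤ 0 :=
      setIntegral_nonpos (hm _ hB) (fun ω hω => hω)
    have h4 : (P (A ∩ {ω | Z ω ≤ 0})).toReal = 0 :=
      le_antisymm ((h2.symm.trans h1.symm).trans_le h3) ENNReal.toReal_nonneg
    exact ((ENNReal.toReal_eq_zero_iff _).mp h4).resolve_right (measure_ne_top P _)
  have hnullZ : P (A ∩ {ω | Z ω = 0}) = 0 :=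
    measure_mono_null (Set.inter_subset_inter_right A (fun ω hω => le_of_eq hω)) hnullB
  refine ⟨hnullZ, ?_⟩
  -- Part 2
  have hGm : (ℱ t : MeasurableSpace Ω) ⊔ MeasurableSpace.generateFrom 𝒞 ≤ m := by
    refine sup_le hm (MeasurableSpace.generateFrom_le ?_)
    rintro s ⟨r, hr, rfl⟩
    exact hσ measurableSet_Ioi
  have hFtG : (ℱ t : MeasurableSpace Ω)
      ≤ (ℱ t : MeasurableSpace Ω) ⊔ MeasurableSpace.generateFrom 𝒞 := le_sup_left
  haveI : IsFiniteMeasure (P.trim hGm) := isFiniteMeasure_trim hGm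
  have hAG : MeasurableSet[(ℱ t : MeasurableSpace Ω) ⊔ MeasurableSpace.generateFrom 𝒞] A :=
    (le_sup_right : MeasurableSpace.generateFrom 𝒞 ≤ _) _
      (MeasurableSpace.measurableSet_generateFrom ⟨t, le_refl t, rfl⟩)
  -- structural lemma
  have struct := stmt_1_trace (ℱ t) A 𝒞 (by
    rintro s ⟨r, hr, rfl⟩
    intro ω hω
    exact lt_of_le_of_lt (ENNReal.coe_le_coe.mpr hr) hω)
  -- Z is a.e. nonnegative and integrable
  have hZnn : 0 ≤ᵐ[P] Z := by
    have hnn : 0 ≤ᵐ[P] P[χ | ℱ t] :=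
      condExp_nonneg (Filter.Eventually.of_forall fun ω =>
        Set.indicator_nonneg (fun _ _ => zero_le_one) ω)
    filter_upwards [hZ, hnn] with ω h1 h2
    rw [h1]; exact h2
  have hZ_int : Integrable Z P := integrable_condExp.congr hZ.symm
  -- key lintegral identity
  have lint : ∀ ψ : Ω → ENNReal, Measurable[ℱ t] ψ →
      ∫⁻ ω in A, ψ ω ∂P = ∫⁻ ω, ψ ω * ENNReal.ofReal (Z ω) ∂P := by
    intro ψ hψ
    have hZE : Measurable[ℱ t] (fun ω => ENNReal.ofReal (Z ω)) :=
      ENNReal.measurable_ofReal.comp hZmeas.measurable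
    have hνeq : (P.restrict A).trim hm
        = (P.trim hm).withDensity (fun ω => ENNReal.ofReal (Z ω)) := by
      refine @Measure.ext Ω (ℱ t) _ _ (fun s hs => ?_)
      have lhs_eq : ((P.restrict A).trim hm) s = P (s ∩ A) := by
        rw [trim_measurableSet_eq hm hs]; exact Measure.restrict_apply (hm _ hs)
      have rhs_eq : ((P.trim hm).withDensity (fun ω => ENNReal.ofReal (Z ω))) s
          = ∫⁻ ω in s, ENNReal.ofReal (Z ω) ∂(P.trim hm) := withDensity_apply _ hs
      rw [lhs_eq, rhs_eq]
      have e1 : ∫⁻ ω in s, ENNReal.ofReal (Z ω) ∂(P.trim hm)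
          = ∫⁻ ω in s, ENNReal.ofReal (Z ω) ∂P :=
        calc ∫⁻ ω in s, ENNReal.ofReal (Z ω) ∂(P.trim hm)
            = ∫⁻ ω, s.indicator (fun ω => ENNReal.ofReal (Z ω)) ω ∂(P.trim hm) :=
              (lintegral_indicator hs _).symm
          _ = ∫⁻ ω, s.indicator (fun ω => ENNReal.ofReal (Z ω)) ω ∂P :=
              lintegral_trim hm (hZE.indicator hs)
          _ = ∫⁻ ω in s, ENNReal.ofReal (Z ω) ∂P := lintegral_indicator (hm _ hs) _
      have e2 : ∫⁻ ω in s, ENNReal.ofReal (Z ω) ∂P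
          = ENNReal.ofReal (∫ ω in s, Z ω ∂P) :=
        (ofReal_integral_eq_lintegral_ofReal hZ_int.restrict (ae_restrict_of_ae hZnn)).symm
      have e3 : ∫ ω in s, Z ω ∂P = (P (s ∩ A)).toReal := by
        calc ∫ ω in s, Z ω ∂P
            = ∫ ω in s, (P[χ | ℱ t]) ω ∂P :=
              setIntegral_congr_ae (hm _ hs) (by filter_upwards [hZ] with ω hω _ using hω)
          _ = ∫ ω in s, χ ω ∂P := setIntegral_condExp hm hχ_int hs
          _ = (P (s ∩ A)).toReal := by
              rw [hχdef, setIntegral_indicator hAmeas, setIntegral_const, smul_eq_mul, mul_one]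
              rfl
      rw [e1, e2, e3, ENNReal.ofReal_toReal (measure_ne_top P _)]
    calc ∫⁻ ω in A, ψ ω ∂P = ∫⁻ ω, ψ ω ∂((P.restrict A).trim hm) := by
          rw [lintegral_trim hm hψ]
      _ = ∫⁻ ω, ψ ω ∂((P.trim hm).withDensity (fun ω => ENNReal.ofReal (Z ω))) := by rw [hνeq]
      _ = ∫⁻ ω, ENNReal.ofReal (Z ω) * ψ ω ∂(P.trim hm) := by
          rw [lintegral_withDensity_eq_lintegral_mul _ hZE hψ]; rfl
      _ = ∫⁻ ω, ψ ω * ENNReal.ofReal (Z ω) ∂P := by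
          rw [lintegral_trim hm (f := fun ω => ENNReal.ofReal (Z ω) * ψ ω) (hZE.mul hψ)]
          simp_rw [mul_comm]
  -- integrability of the candidate
  have hq_sm : StronglyMeasurable[ℱ t] (fun ω => h ω / Z ω) :=
    (hh_sm.measurable.div hZmeas.measurable).stronglyMeasurable
  set g : Ω → ℝ := A.indicator (fun ω => h ω / Z ω) with hgdef
  have hg_int : Integrable g P := by
    constructor
    · exact ((hq_sm.mono hm).indicator hAmeas).aestronglyMeasurable
    · rw [HasFiniteIntegral]
      have e0 : ∀ ω, (‖g ω‖₊ : ENNReal)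
          = A.indicator (fun ω => (‖h ω / Z ω‖₊ : ENNReal)) ω := by
        intro ω
        by_cases hω : ω ∈ A <;>
          simp [hgdef, Set.indicator_of_mem, Set.indicator_of_notMem, hω]
      simp_rw [enorm_eq_nnnorm]
      simp_rw [e0]
      rw [lintegral_indicator hAmeas]
      have hψm : Measurable[ℱ t] (fun ω => (‖h ω / Z ω‖₊ : ENNReal)) :=
        measurable_coe_nnreal_ennreal.comp (measurable_nnnorm.comp (hh_sm.measurable.div hZmeas.measurable))
      rw [lint _ hψm]
      have hbound : ∀ᵐ ω ∂P,
          (‖h ω / Z ω‖₊ : ENNReal) * ENNReal.ofReal (Z ω) ≤ (‖h ω‖₊ : ENNReal) := by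
        filter_upwards [hZnn] with ω hω
        rcases eq_or_lt_of_le hω with hz | hz
        · simp [← hz]
        · rw [← enorm_eq_nnnorm, ← enorm_eq_nnnorm, ← ofReal_norm, ← ofReal_norm,
            ← ENNReal.ofReal_mul (norm_nonneg _)]
          apply ENNReal.ofReal_le_ofReal
          rw [Real.norm_eq_abs, Real.norm_eq_abs, abs_div, abs_of_pos hz,
            div_mul_cancel₀ _ (ne_of_gt hz)]
      calc ∫⁻ ω, (‖h ω / Z ω‖₊ : ENNReal) * ENNReal.ofReal (Z ω) ∂P
          ≤ ∫⁻ ω, (‖h ω‖₊ : ENNReal) ∂P := lintegral_mono_ae hbound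
        _ < ⊤ := hh_int.2
  -- the key integral computation over F ∩ A for F ∈ ℱ t
  have keyF : ∀ F : Set Ω, MeasurableSet[ℱ t] F →
      ∫ ω, (F ∩ A).indicator (fun ω => h ω / Z ω) ω ∂P = ∫ ω in F, f ω ∂P := by
    intro F hF
    set φ : Ω → ℝ := fun ω => F.indicator (fun _ => (1:ℝ)) ω * (h ω / Z ω) with hφdef
    have hφ_sm : StronglyMeasurable[ℱ t] φ :=
      (stronglyMeasurable_const.indicator hF).mul hq_sm
    have hφχ : (fun ω => φ ω * χ ω) = F.indicator g := by
      funext ω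
      by_cases hωF : ω ∈ F <;> by_cases hωA : ω ∈ A <;>
        simp [hφdef, hχdef, hgdef, Set.indicator_of_mem, Set.indicator_of_notMem, hωF, hωA]
    have hφχ_int : Integrable (fun ω => φ ω * χ ω) P := by
      rw [hφχ]; exact hg_int.indicator (hm _ hF)
    have pull : P[fun ω => φ ω * χ ω | ℱ t] =ᵐ[P] fun ω => φ ω * (P[χ | ℱ t]) ω :=
      condExp_mul_of_stronglyMeasurable_left hφ_sm hφχ_int hχ_int
    have step1 : ∫ ω, φ ω * χ ω ∂P = ∫ ω, φ ω * Z ω ∂P :=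
      calc ∫ ω, φ ω * χ ω ∂P
          = ∫ ω, (P[fun ω => φ ω * χ ω | ℱ t]) ω ∂P := (integral_condExp hm).symm
        _ = ∫ ω, φ ω * Z ω ∂P := by
            refine integral_congr_ae ?_
            filter_upwards [pull, hZ] with ω h1 h2
            rw [h1, h2]
    -- φ * Z = F.indicator h minus its part on {Z = 0}
    have hw : (fun ω => φ ω * Z ω)
        = fun ω => F.indicator h ω - (F ∩ {ω | Z ω = 0}).indicator h ω := by
      funext ω
      by_cases hωF : ω ∈ F
      · by_cases hz : Z ω = 0
        · simp [hφdef, Set.indicator_of_mem hωF, hz,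
            Set.indicator_of_mem (Set.mem_inter hωF (show ω ∈ {ω | Z ω = 0} from hz))]
        · rw [Set.indicator_of_notMem (fun hmem : ω ∈ F ∩ {ω | Z ω = 0} => hz hmem.2), hφdef]
          simp [Set.indicator_of_mem hωF, div_mul_cancel₀ _ hz]
      · simp [hφdef, Set.indicator_of_notMem hωF,
          Set.indicator_of_notMem (fun hmem : ω ∈ F ∩ {ω | Z ω = 0} => hωF hmem.1)]
    have hFZ : MeasurableSet[ℱ t] (F ∩ {ω | Z ω = 0}) :=
      hF.inter (hZmeas.measurable (measurableSet_singleton 0))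
    have hzero : ∫ ω, (F ∩ {ω | Z ω = 0}).indicator h ω ∂P = 0 := by
      rw [integral_indicator (hm _ hFZ), setIntegral_condExp hm hf_int hFZ,
        ← integral_indicator (hm _ hFZ)]
      have hae : (F ∩ {ω | Z ω = 0}).indicator f =ᵐ[P] 0 := by
        have hnull' : ∀ᵐ ω ∂P, ω ∉ A ∩ {ω | Z ω = 0} := compl_mem_ae_iff.mpr hnullZ
        filter_upwards [hnull'] with ω hω
        by_cases hmem : ω ∈ F ∩ {ω | Z ω = 0}
        · rw [Set.indicator_of_mem hmem]
          have hA' : ω ∉ A := fun hA' => hω ⟨hA', hmem.2⟩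
          simp [hf_eq, Set.indicator_of_notMem hA']
        · rw [Set.indicator_of_notMem hmem]; rfl
      rw [integral_congr_ae hae, Pi.zero_def, integral_zero]
    have step2 : ∫ ω, φ ω * Z ω ∂P = ∫ ω in F, h ω ∂P := by
      rw [hw, integral_sub (hh_int.indicator (hm _ hF)) (hh_int.indicator (hm _ hFZ)),
        hzero, sub_zero, integral_indicator (hm _ hF)]
    have step0 : ∫ ω, (F ∩ A).indicator (fun ω => h ω / Z ω) ω ∂P = ∫ ω, φ ω * χ ω ∂P := by
      rw [hφχ, hgdef]
      congr 1
      funext ω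
      rw [Set.indicator_indicator]
    rw [step0, step1, step2, setIntegral_condExp hm hf_int hF]
  -- pointwise identity between the RHS of the goal and g
  have hrhs : (fun ω => χ ω * (h ω / Z ω)) = g := by
    funext ω
    by_cases hω : ω ∈ A <;>
      simp [hχdef, hgdef, Set.indicator_of_mem, Set.indicator_of_notMem, hω]
  -- conclude by uniqueness of conditional expectation
  have main : g =ᵐ[P] P[f | (ℱ t : MeasurableSpace Ω) ⊔ MeasurableSpace.generateFrom 𝒞] := by
    refine ae_eq_condExp_of_forall_setIntegral_eq hGm hf_int
      (fun s _ _ => hg_int.integrableOn) (fun s hs _ => ?_)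
      ((hq_sm.mono hFtG).indicator hAG).aestronglyMeasurable
    obtain ⟨F, hF, hsA⟩ := struct s hs
    have l1 : ∫ ω in s, g ω ∂P = ∫ ω, (s ∩ A).indicator (fun ω => h ω / Z ω) ω ∂P := by
      rw [← integral_indicator (hGm _ hs), hgdef]
      congr 1
      funext ω
      rw [Set.indicator_indicator]
    have l2 : ∫ ω in s, f ω ∂P = ∫ ω in F, f ω ∂P := by
      rw [← integral_indicator (hGm _ hs), ← integral_indicator (hm _ hF)]
      congr 1
      funext ω
      have e : s.indicator f ω = (s ∩ A).indicator ξ ω := by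
        rw [hf_eq, Set.indicator_indicator]
      rw [e, hsA, ← Set.indicator_indicator, ← hf_eq]
    rw [l1, hsA, keyF F hF, l2]
  refine main.symm.trans ?_
  rw [hrhs]
end

section
/- Let σ be a random time and let T be a stopping time for the right-continuous progressively enlarged filtration (G_t^+). Then there exists an (F_t)-stopping time S such that T ∧ σ = S ∧ σ. -/
open MeasureTheory

/-- Sets in `ℱ s ⊔ σ({σ > r} : r ≤ s)` agree with an `ℱ s`-set on `{σ > s}`. -/
lemma aux_one {Ω : Type*} {m : MeasurableSpace Ω} (ℱ : Filtration NNReal m)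
    (σ : Ω → ENNReal) (s : NNReal) (A : Set Ω)
    (hA : MeasurableSet[(ℱ s : MeasurableSpace Ω) ⊔ MeasurableSpace.generateFrom
      {A : Set Ω | ∃ r : NNReal, r ≤ s ∧ A = {ω | (r : ENNReal) < σ ω}}] A) :
    ∃ B : Set Ω, MeasurableSet[ℱ s] B ∧
      A ∩ {ω | (s:ENNReal) < σ ω} = B ∩ {ω | (s:ENNReal) < σ ω} := by
  set D : Set Ω := {ω | (s:ENNReal) < σ ω} with hD
  let m' : MeasurableSpace Ω :=
    { MeasurableSet' := fun A => ∃ B, MeasurableSet[ℱ s] B ∧ A ∩ D = B ∩ D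
      measurableSet_empty := ⟨∅, @MeasurableSet.empty Ω (ℱ s), rfl⟩
      measurableSet_compl := by
        rintro A ⟨B, hB, hAB⟩
        refine ⟨Bᶜ, hB.compl, ?_⟩
        rw [Set.ext_iff] at hAB ⊢
        intro ω
        have := hAB ω
        simp only [Set.mem_inter_iff, Set.mem_compl_iff] at this ⊢
        tauto
      measurableSet_iUnion := by
        intro f hf
        choose B hB hBe using hf
        refine ⟨⋃ n, B n, MeasurableSet.iUnion hB, ?_⟩
        rw [Set.iUnion_inter, Set.iUnion_inter]
        exact Set.iUnion_congr hBe }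
  have hle : (ℱ s : MeasurableSpace Ω) ⊔ MeasurableSpace.generateFrom
      {A : Set Ω | ∃ r : NNReal, r ≤ s ∧ A = {ω | (r : ENNReal) < σ ω}} ≤ m' := by
    refine sup_le ?_ ?_
    · intro A hA
      exact ⟨A, hA, rfl⟩
    · refine MeasurableSpace.generateFrom_le ?_
      rintro A ⟨r, hr, rfl⟩
      refine ⟨Set.univ, MeasurableSet.univ, ?_⟩
      rw [Set.univ_inter]
      apply Set.inter_eq_right.mpr
      intro ω hω
      simp only [hD, Set.mem_setOf_eq] at hω ⊢
      exact lt_of_le_of_lt (by exact_mod_cast hr) hω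
  exact hle A hA

/-- Sets in `𝒢⁺ t` agree with an `ℱ t`-set on `{σ > t}`. -/
lemma aux_two {Ω : Type*} {m : MeasurableSpace Ω} (ℱ : Filtration NNReal m)
    (hrc : ∀ t : NNReal,
      (ℱ t : MeasurableSpace Ω) = ⨅ (s : NNReal) (_ : t < s), (ℱ s : MeasurableSpace Ω))
    (σ : Ω → ENNReal) (t : NNReal) (A : Set Ω)
    (hA : MeasurableSet[⨅ (s : NNReal) (_ : t < s),
      ((ℱ s : MeasurableSpace Ω) ⊔ MeasurableSpace.generateFrom
        {A : Set Ω | ∃ r : NNReal, r ≤ s ∧ A = {ω | (r : ENNReal) < σ ω}})] A) :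
    ∃ B : Set Ω, MeasurableSet[ℱ t] B ∧
      A ∩ {ω | (t:ENNReal) < σ ω} = B ∩ {ω | (t:ENNReal) < σ ω} := by
  set sn : ℕ → NNReal := fun n => t + ((n : NNReal) + 1)⁻¹ with hsn
  have hpos : ∀ n : ℕ, (0 : NNReal) < ((n : NNReal) + 1)⁻¹ := fun n => by positivity
  have hlt : ∀ n : ℕ, t < sn n := fun n => lt_add_of_pos_right t (hpos n)
  have hanti : ∀ n k : ℕ, n ≤ k → sn k ≤ sn n := by
    intro n k h
    apply add_le_add_right
    apply inv_anti₀ (by positivity)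
    exact add_le_add_left (Nat.cast_le.mpr h) 1
  -- find an index with sn n ≤ u whenever t < u
  have hfind : ∀ u : NNReal, t < u → ∃ n : ℕ, sn n ≤ u := by
    intro u hu
    obtain ⟨n, hn⟩ := exists_nat_gt ((u - t)⁻¹)
    refine ⟨n, ?_⟩
    have hut : 0 < u - t := tsub_pos_of_lt hu
    have h1 : ((n : NNReal) + 1)⁻¹ ≤ u - t := by
      rw [inv_le_comm₀ (by positivity) hut]
      calc (u - t)⁻¹ ≤ (n : NNReal) := le_of_lt hn
        _ ≤ (n : NNReal) + 1 := le_add_of_nonneg_right zero_le_one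
    calc sn n = t + ((n : NNReal) + 1)⁻¹ := rfl
      _ ≤ t + (u - t) := add_le_add_right h1 t
      _ = u := add_tsub_cancel_of_le hu.le
  have hmem : ∀ n : ℕ, MeasurableSet[(ℱ (sn n) : MeasurableSpace Ω) ⊔
      MeasurableSpace.generateFrom
        {A : Set Ω | ∃ r : NNReal, r ≤ sn n ∧ A = {ω | (r : ENNReal) < σ ω}}] A := by
    intro n
    have := (MeasurableSpace.measurableSet_iInf.mp hA) (sn n)
    exact (MeasurableSpace.measurableSet_iInf.mp this) (hlt n)
  choose Bn hBn hBne using fun n => aux_one ℱ σ (sn n) A (hmem n)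
  have hBne' : ∀ n ω, (sn n : ENNReal) < σ ω → (ω ∈ A ↔ ω ∈ Bn n) := by
    intro n ω hω
    have := Set.ext_iff.mp (hBne n) ω
    simp only [Set.mem_inter_iff, Set.mem_setOf_eq] at this
    tauto
  set C : ℕ → Set Ω := fun N => ⋂ n, Bn (N + n) with hC
  have hCmono : ∀ N M : ℕ, N ≤ M → C N ⊆ C M := by
    intro N M h ω hω
    simp only [hC, Set.mem_iInter] at hω ⊢
    intro n
    have := hω (M - N + n)
    rwa [← Nat.add_assoc, Nat.add_sub_cancel' h] at this
  refine ⟨⋃ N, C N, ?_, ?_⟩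
  · rw [hrc t]
    rw [MeasurableSpace.measurableSet_iInf]
    intro s
    rw [MeasurableSpace.measurableSet_iInf]
    intro hs
    obtain ⟨M, hM⟩ := hfind s hs
    have : (⋃ N, C N) = ⋃ N, C (M + N) := by
      apply Set.Subset.antisymm
      · exact Set.iUnion_mono' fun N => ⟨N, hCmono N (M + N) (Nat.le_add_left N M)⟩
      · exact Set.iUnion_mono' fun N => ⟨M + N, subset_rfl⟩
    rw [this]
    refine MeasurableSet.iUnion fun N => MeasurableSet.iInter fun n => ?_
    have h1 : sn (M + N + n) ≤ s := le_trans (hanti M (M + N + n) (by omega)) hM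
    exact ℱ.mono h1 _ (hBn (M + N + n))
  · ext ω
    simp only [Set.mem_inter_iff, Set.mem_setOf_eq]
    refine and_congr_left fun hω => ?_
    obtain ⟨u, hu1, hu2⟩ := ENNReal.lt_iff_exists_nnreal_btwn.mp hω
    obtain ⟨N₀, hN₀⟩ := hfind u (ENNReal.coe_lt_coe.mp hu1)
    have key : ∀ k, N₀ ≤ k → (ω ∈ A ↔ ω ∈ Bn k) := by
      intro k hk
      refine hBne' k ω (lt_of_le_of_lt ?_ hu2)
      exact_mod_cast le_trans (hanti N₀ k hk) hN₀
    constructor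
    · intro hA'
      refine Set.mem_iUnion.mpr ⟨N₀, Set.mem_iInter.mpr fun n => ?_⟩
      exact (key (N₀ + n) (Nat.le_add_right _ _)).mp hA'
    · intro hB'
      obtain ⟨N, hN⟩ := Set.mem_iUnion.mp hB'
      have := Set.mem_iInter.mp hN N₀
      exact (key (N + N₀) (Nat.le_add_left _ _)).mpr this

/-- Let `(ℱ t)` be a right-continuous filtration, `σ` a random time, and
`T` a stopping time for the right-continuous progressively enlarged filtration
`𝒢⁺ t = ⋂_{s>t} (ℱ s ⊔ σ({σ > r} : r ≤ s))`. Then there exists an `(ℱ t)`-stopping time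
`S` such that `T ∧ σ = S ∧ σ`. -/
theorem stmt_2 {Ω : Type*} {m : MeasurableSpace Ω}
    (P : Measure Ω) [IsProbabilityMeasure P]
    (ℱ : Filtration NNReal m)
    (hrc : ∀ t : NNReal,
      (ℱ t : MeasurableSpace Ω) = ⨅ (s : NNReal) (_ : t < s), (ℱ s : MeasurableSpace Ω))
    (σ : Ω → ENNReal) (hσ : Measurable σ)
    (Gplus : NNReal → MeasurableSpace Ω)
    (hGplus : ∀ t : NNReal, Gplus t = ⨅ (s : NNReal) (_ : t < s),
      ((ℱ s : MeasurableSpace Ω) ⊔ MeasurableSpace.generateFrom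
        {A : Set Ω | ∃ r : NNReal, r ≤ s ∧ A = {ω | (r : ENNReal) < σ ω}}))
    (T : Ω → ENNReal)
    (hT : ∀ t : NNReal, MeasurableSet[Gplus t] {ω | T ω ≤ (t : ENNReal)}) :
    ∃ S : Ω → ENNReal,
      (∀ t : NNReal, MeasurableSet[ℱ t] {ω | S ω ≤ (t : ENNReal)}) ∧
      ∀ ω, min (T ω) (σ ω) = min (S ω) (σ ω) := by
  have hT' : ∀ r : NNReal, MeasurableSet[⨅ (s : NNReal) (_ : r < s),
      ((ℱ s : MeasurableSpace Ω) ⊔ MeasurableSpace.generateFrom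
        {A : Set Ω | ∃ r' : NNReal, r' ≤ s ∧ A = {ω | (r' : ENNReal) < σ ω}})]
      {ω | T ω ≤ (r : ENNReal)} := by
    intro r
    have := hT r
    rwa [hGplus r] at this
  choose B hBm hBe using fun r : NNReal =>
    aux_two ℱ hrc σ r {ω | T ω ≤ (r : ENNReal)} (hT' r)
  have key : ∀ (r : NNReal) ω, (r : ENNReal) < σ ω → (ω ∈ B r ↔ T ω ≤ (r : ENNReal)) := by
    intro r ω hω
    have := Set.ext_iff.mp (hBe r) ω
    simp only [Set.mem_inter_iff, Set.mem_setOf_eq] at this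
    tauto
  set S : Ω → ENNReal := fun ω =>
    ⨅ (q : ℚ) (_ : ω ∈ B (Real.toNNReal q)), ((Real.toNNReal q : NNReal) : ENNReal) with hS
  have hSlt : ∀ ω (c : ENNReal), S ω < c ↔
      ∃ q : ℚ, ω ∈ B (Real.toNNReal q) ∧ ((Real.toNNReal q : NNReal) : ENNReal) < c := by
    intro ω c
    rw [hS]
    simp only [iInf_lt_iff, exists_prop]
  refine ⟨S, ?_, ?_⟩
  · intro t
    rw [hrc t]
    rw [MeasurableSpace.measurableSet_iInf]
    intro s
    rw [MeasurableSpace.measurableSet_iInf]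
    intro hs
    have hset : {ω | S ω ≤ (t : ENNReal)} =
        ⋂ (q : {q : ℚ // (t : ENNReal) < (Real.toNNReal q : NNReal) ∧
          ((Real.toNNReal q : NNReal) : ENNReal) < (s : ENNReal)}),
          {ω | S ω < ((Real.toNNReal q.1 : NNReal) : ENNReal)} := by
      ext ω
      simp only [Set.mem_setOf_eq, Set.mem_iInter]
      constructor
      · rintro h ⟨q, hq1, hq2⟩
        exact lt_of_le_of_lt h hq1
      · intro h
        by_contra hc
        push_neg at hc
        have h1 : (t : ENNReal) < min (S ω) (s : ENNReal) :=
          lt_min hc (ENNReal.coe_lt_coe.mpr hs)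
        obtain ⟨q, hq0, hq1, hq2⟩ := ENNReal.lt_iff_exists_rat_btwn.mp h1
        have hq2' := lt_min_iff.mp hq2
        have := h ⟨q, hq1, hq2'.2⟩
        exact absurd this (not_lt_of_gt hq2'.1)
    rw [hset]
    refine MeasurableSet.iInter fun q => ?_
    have hunion : {ω | S ω < ((Real.toNNReal q.1 : NNReal) : ENNReal)} =
        ⋃ (p : {p : ℚ // ((Real.toNNReal p : NNReal) : ENNReal) <
          ((Real.toNNReal q.1 : NNReal) : ENNReal)}), B (Real.toNNReal p.1) := by
      ext ω
      simp only [Set.mem_setOf_eq, Set.mem_iUnion]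
      rw [hSlt]
      constructor
      · rintro ⟨p, hp1, hp2⟩
        exact ⟨⟨p, hp2⟩, hp1⟩
      · rintro ⟨⟨p, hp2⟩, hp1⟩
        exact ⟨p, hp1, hp2⟩
    rw [hunion]
    refine MeasurableSet.iUnion fun p => ?_
    have hps : Real.toNNReal p.1 ≤ s := by
      have h1 : ((Real.toNNReal p.1 : NNReal) : ENNReal) < (s : ENNReal) :=
        lt_trans p.2 q.2.2
      exact (ENNReal.coe_lt_coe.mp h1).le
    exact ℱ.mono hps _ (hBm (Real.toNNReal p.1))
  · intro ω
    rcases lt_or_ge (T ω) (σ ω) with hc | hc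
    · -- show S ω = T ω
      have hge : T ω ≤ S ω := by
        rw [hS]
        refine le_iInf fun q => le_iInf fun hq => ?_
        rcases lt_or_ge ((Real.toNNReal q : NNReal) : ENNReal) (σ ω) with h | h
        · exact (key _ ω h).mp hq
        · exact le_trans hc.le h
      have hle : S ω ≤ T ω := by
        refine le_of_forall_gt_imp_ge_of_dense fun c hc' => ?_
        have h1 : T ω < min c (σ ω) := lt_min hc' hc
        obtain ⟨q, hq0, hq1, hq2⟩ := ENNReal.lt_iff_exists_rat_btwn.mp h1
        have hq2' := lt_min_iff.mp hq2
        have hmem : ω ∈ B (Real.toNNReal q) := (key _ ω hq2'.2).mpr hq1.le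
        calc S ω ≤ ((Real.toNNReal q : NNReal) : ENNReal) := by
              rw [hS]; exact iInf₂_le q hmem
          _ ≤ c := hq2'.1.le
      rw [le_antisymm hle hge]
    · -- σ ω ≤ T ω : show σ ω ≤ S ω
      have hge : σ ω ≤ S ω := by
        rw [hS]
        refine le_iInf fun q => le_iInf fun hq => ?_
        by_contra h
        push_neg at h
        have := (key _ ω h).mp hq
        exact absurd (le_trans hc this) (not_le.mpr h)
      rw [min_eq_right hc, min_eq_right hge]
end

section
/- Under the dual projection property, the following are equivalent: (i) A_∞ = 1 P-almost surely; (ii) the law of A_σ under P is the uniform distribution on [0,1]. -/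
open MeasureTheory Filter

private lemma sublevel_measure (A : NNReal → ℝ) (Atop : ℝ)
    (hm : Monotone A) (hc : Continuous A) (h0 : A 0 = 0)
    (hl : Tendsto A atTop (nhds Atop))
    (ν : Measure NNReal)
    (hIoc : ∀ a b : NNReal, a ≤ b → ν (Set.Ioc a b) = ENNReal.ofReal (A b - A a))
    (hz : ν {0} = 0) (ht : ν Set.univ = ENNReal.ofReal Atop)
    (c : ℝ) (hc0 : 0 ≤ c) :
    ν {u | A u ≤ c} = ENNReal.ofReal (min c Atop) := by
  have hub : ∀ u, A u ≤ Atop := hm.ge_of_tendsto hl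
  by_cases hca : Atop ≤ c
  · have huniv : {u : NNReal | A u ≤ c} = Set.univ := by
      ext u; simp [le_trans (hub u) hca]
    rw [huniv, ht, min_eq_right hca]
  · push_neg at hca
    set S := {u : NNReal | A u ≤ c} with hS
    have hSne : S.Nonempty := ⟨0, by simp [hS, h0, hc0]⟩
    obtain ⟨N, hN⟩ : ∃ N, c < A N := (hl.eventually (eventually_gt_nhds hca)).exists
    have hNub : ∀ u ∈ S, u ≤ N := by
      intro u hu
      by_contra h
      push_neg at h
      exact absurd hu (not_le.mpr (lt_of_lt_of_le hN (hm h.le)))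
    have hSbdd : BddAbove S := ⟨N, hNub⟩
    have hScl : IsClosed S := isClosed_le hc continuous_const
    set t := sSup S with htdef
    have htS : t ∈ S := hScl.csSup_mem hSne hSbdd
    have hAt_le : A t ≤ c := htS
    have htN : t ≤ N := hNub t htS
    have hAt : A t = c := by
      obtain ⟨u, hu, hAu⟩ :=
        intermediate_value_Icc htN hc.continuousOn ⟨hAt_le, hN.le⟩
      have hut : u ≤ t := le_csSup hSbdd (by exact hAu.le : u ∈ S)
      have : u = t := le_antisymm hut hu.1
      rw [← this, hAu]
    have hSIic : S = Set.Iic t := by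
      ext u
      constructor
      · exact fun hu => le_csSup hSbdd hu
      · exact fun hu => le_trans (hm hu) hAt_le
    have hIic : Set.Iic t = {0} ∪ Set.Ioc 0 t := by
      ext u
      simp only [Set.mem_Iic, Set.mem_union, Set.mem_singleton_iff, Set.mem_Ioc]
      constructor
      · intro h
        rcases eq_or_ne u 0 with h0u | h0u
        · exact Or.inl h0u
        · exact Or.inr ⟨zero_lt_iff.mpr h0u, h⟩
      · rintro (rfl | ⟨_, h⟩)
        · exact zero_le
        · exact h
    have hdisj : Disjoint ({0} : Set NNReal) (Set.Ioc 0 t) := by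
      rw [Set.disjoint_left]
      rintro u rfl ⟨h1, _⟩
      exact lt_irrefl _ h1
    rw [hSIic, hIic, measure_union hdisj measurableSet_Ioc, hz,
      hIoc 0 t zero_le, h0, zero_add, hAt, sub_zero, min_eq_left hca.le]

private lemma uniform_Iic (a : ℝ) (ha : 0 ≤ a) :
    (volume.restrict (Set.Icc (0 : ℝ) 1)) (Set.Iic a) = ENNReal.ofReal (min a 1) := by
  rw [Measure.restrict_apply measurableSet_Iic]
  have : Set.Iic a ∩ Set.Icc 0 1 = Set.Icc 0 (min a 1) := by
    ext x
    simp only [Set.mem_inter_iff, Set.mem_Iic, Set.mem_Icc, le_min_iff]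
    constructor
    · rintro ⟨h1, h2, h3⟩; exact ⟨h2, h1, h3⟩
    · rintro ⟨h1, h2, h3⟩; exact ⟨h2, h1, h3⟩
  rw [this, Real.volume_Icc, sub_zero]

/-- Let `σ : Ω → [0,∞)` be a random time, `A` a jointly measurable
process whose paths are (a.e.) continuous, nondecreasing, start at `0` and converge to a
finite limit `Atop`, and let `ν ω` be the Lebesgue–Stieltjes measure on `(0,∞)` of the
path `t ↦ A t ω`.  Assume the dual projection property:
`E[f(A_σ)] = E[∫ f(A_u) dA_u]` for every bounded measurable `f`.  Then the following are
equivalent: (i) `A_∞ = 1` `P`-a.s.; (ii) the law of `A_σ` under `P` is the uniform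
distribution on `[0,1]`. -/
theorem stmt_4 {Ω : Type*} {m : MeasurableSpace Ω}
    (P : Measure Ω) [IsProbabilityMeasure P]
    (σ : Ω → NNReal) (hσ : Measurable σ)
    (A : NNReal → Ω → ℝ)
    (hAmeas : Measurable fun p : NNReal × Ω => A p.1 p.2)
    (Atop : Ω → ℝ)
    (hpath : ∀ᵐ ω ∂P, Monotone (fun t => A t ω) ∧ Continuous (fun t => A t ω) ∧
      A 0 ω = 0 ∧ Tendsto (fun t => A t ω) atTop (nhds (Atop ω)))
    (ν : Ω → Measure NNReal)
    (hν : ∀ᵐ ω ∂P, (∀ a b : NNReal, a ≤ b →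
        ν ω (Set.Ioc a b) = ENNReal.ofReal (A b ω - A a ω)) ∧
      ν ω {0} = 0 ∧ ν ω Set.univ = ENNReal.ofReal (Atop ω))
    (hdual : ∀ f : ℝ → ℝ, Measurable f → (∃ C, ∀ x, |f x| ≤ C) →
      ∫ ω, f (A (σ ω) ω) ∂P = ∫ ω, ∫ u, f (A u ω) ∂(ν ω) ∂P) :
    (∀ᵐ ω ∂P, Atop ω = 1) ↔
      Measure.map (fun ω => A (σ ω) ω) P = volume.restrict (Set.Icc (0 : ℝ) 1) := by
  set g : Ω → ℝ := fun ω => A (σ ω) ω with hgdef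
  have hg : Measurable g := hAmeas.comp (hσ.prodMk measurable_id)
  -- nonnegativity facts
  have hgnn : ∀ᵐ ω ∂P, 0 ≤ g ω := by
    filter_upwards [hpath] with ω hω
    have := hω.1 (zero_le : 0 ≤ σ ω)
    simpa [hω.2.2.1] using this
  have hAtopnn : ∀ᵐ ω ∂P, 0 ≤ Atop ω := by
    filter_upwards [hpath] with ω hω
    refine ge_of_tendsto' hω.2.2.2 fun u => ?_
    have := hω.1 (zero_le : 0 ≤ u)
    simpa [hω.2.2.1] using this
  -- the key identity coming from the dual projection property
  have key : ∀ c : ℝ, 0 ≤ c →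
      (P (g ⁻¹' Set.Iic c)).toReal = ∫ ω, min c (Atop ω) ∂P := by
    intro c hc0
    have hf : Measurable ((Set.Iic c).indicator (fun _ => (1 : ℝ))) :=
      measurable_const.indicator measurableSet_Iic
    have hbd : ∃ C, ∀ x, |(Set.Iic c).indicator (fun _ => (1 : ℝ)) x| ≤ C := by
      refine ⟨1, fun x => ?_⟩
      by_cases h : x ∈ Set.Iic c <;> simp [Set.indicator_apply, h]
    have hd := hdual _ hf hbd
    have hL : (fun ω => (Set.Iic c).indicator (fun _ => (1 : ℝ)) (A (σ ω) ω)) =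
        (g ⁻¹' Set.Iic c).indicator (fun _ => (1 : ℝ)) := by
      funext ω
      by_cases h : A (σ ω) ω ≤ c <;>
        simp [Set.indicator_apply, Set.mem_preimage, hgdef, h]
    rw [hL, integral_indicator_const (1 : ℝ) (hg measurableSet_Iic), measureReal_def, smul_eq_mul,
      mul_one] at hd
    have hae : ∀ᵐ ω ∂P,
        ∫ u, (Set.Iic c).indicator (fun _ => (1 : ℝ)) (A u ω) ∂(ν ω) =
          min c (Atop ω) := by
      filter_upwards [hpath, hν, hAtopnn] with ω hω hνω hA0
      obtain ⟨hm', hc', h0', hl'⟩ := hω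
      obtain ⟨hI, hz, htot⟩ := hνω
      have hms : MeasurableSet {u : NNReal | A u ω ≤ c} :=
        hc'.measurable measurableSet_Iic
      have h1 : (fun u => (Set.Iic c).indicator (fun _ => (1 : ℝ)) (A u ω)) =
          fun u => ({u : NNReal | A u ω ≤ c}).indicator (fun _ => (1 : ℝ)) u := by
        funext u
        simp [Set.indicator_apply]
      rw [h1, integral_indicator_const (1 : ℝ) hms, measureReal_def,
        sublevel_measure _ _ hm' hc' h0' hl' _ hI hz htot c hc0,
        ENNReal.toReal_ofReal (le_min hc0 hA0), smul_eq_mul, mul_one]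
    rw [hd, integral_congr_ae hae]
  constructor
  · -- (i) → (ii)
    intro h
    have key' : ∀ c : ℝ, 0 ≤ c → P (g ⁻¹' Set.Iic c) = ENNReal.ofReal (min c 1) := by
      intro c hc0
      have hint : ∫ ω, min c (Atop ω) ∂P = min c 1 := by
        rw [integral_congr_ae (h.mono fun ω hω => by rw [hω]), integral_const]
        simp
      have := key c hc0
      rw [hint] at this
      rw [← ENNReal.ofReal_toReal (measure_ne_top P _), this]
    haveI : IsProbabilityMeasure (Measure.map g P) :=
      Measure.isProbabilityMeasure_map hg.aemeasurable
    refine Measure.ext_of_Iic (Measure.map g P) _ fun a => ?_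
    rw [Measure.map_apply hg measurableSet_Iic]
    rcases le_or_gt 0 a with ha | ha
    · rw [key' a ha, uniform_Iic a ha]
    · have hleft : P (g ⁻¹' Set.Iic a) = 0 := by
        refine measure_mono_null (fun ω hω => ?_) (ae_iff.mp hgnn)
        exact not_le.mpr (lt_of_le_of_lt hω ha)
      have hright : Set.Iic a ∩ Set.Icc (0 : ℝ) 1 = ∅ := by
        ext x
        simp only [Set.mem_inter_iff, Set.mem_Iic, Set.mem_Icc, Set.mem_empty_iff_false,
          iff_false, not_and]
        intro h1 h2
        linarith
      rw [hleft, Measure.restrict_apply measurableSet_Iic, hright, measure_empty]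
  · -- (ii) → (i)
    intro hmap
    have hP : ∀ c : ℝ, 0 ≤ c → ∫ ω, min c (Atop ω) ∂P = min c 1 := by
      intro c hc0
      have h1 : P (g ⁻¹' Set.Iic c) = ENNReal.ofReal (min c 1) := by
        rw [← Measure.map_apply hg measurableSet_Iic, hmap, uniform_Iic c hc0]
      have := key c hc0
      rw [h1, ENNReal.toReal_ofReal (le_min hc0 zero_le_one)] at this
      exact this.symm
    -- Atop is a.e. measurable
    have hAn : ∀ n : ℕ, Measurable (fun ω => A n ω) := fun n =>
      hAmeas.comp (measurable_const.prodMk measurable_id)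
    have htend : ∀ᵐ ω ∂P, Tendsto (fun n : ℕ => A n ω) atTop (nhds (Atop ω)) := by
      filter_upwards [hpath] with ω hω
      exact hω.2.2.2.comp tendsto_natCast_atTop_atTop
    have hAtop : AEMeasurable Atop P :=
      aemeasurable_of_tendsto_metrizable_ae atTop (fun n => (hAn n).aemeasurable) htend
    have hint : ∀ c : ℝ, 0 ≤ c → Integrable (fun ω => min c (Atop ω)) P := by
      intro c hc0
      refine Integrable.mono' (integrable_const c) (aemeasurable_const.min hAtop).aestronglyMeasurable ?_
      filter_upwards [hAtopnn] with ω hω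
      rw [Real.norm_eq_abs, abs_of_nonneg (le_min hc0 hω)]
      exact min_le_left _ _
    have h1 : ∫ ω, min 1 (Atop ω) ∂P = 1 := by
      have := hP 1 zero_le_one; simpa using this
    have h2 : ∫ ω, min 2 (Atop ω) ∂P = 1 := by
      have := hP 2 (by norm_num)
      rw [min_eq_right (by norm_num : (1:ℝ) ≤ 2)] at this
      exact this
    have step1 : ∀ᵐ ω ∂P, min 1 (Atop ω) = 1 := by
      have hz : ∫ ω, (1 - min 1 (Atop ω)) ∂P = 0 := by
        rw [integral_sub (integrable_const 1) (hint 1 zero_le_one), h1, integral_const]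
        simp
      have hnn : 0 ≤ᵐ[P] fun ω => 1 - min 1 (Atop ω) :=
        Eventually.of_forall fun ω => by
          simp only [Pi.zero_apply, sub_nonneg]
          exact min_le_left _ _
      have := (integral_eq_zero_iff_of_nonneg_ae hnn
        ((integrable_const 1).sub (hint 1 zero_le_one))).mp hz
      filter_upwards [this] with ω hω
      have : (1 : ℝ) - min 1 (Atop ω) = 0 := hω
      linarith
    have step2 : ∀ᵐ ω ∂P, min 2 (Atop ω) = min 1 (Atop ω) := by
      have hz : ∫ ω, (min 2 (Atop ω) - min 1 (Atop ω)) ∂P = 0 := by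
        rw [integral_sub (hint 2 (by norm_num)) (hint 1 zero_le_one), h1, h2]
        simp
      have hnn : 0 ≤ᵐ[P] fun ω => min 2 (Atop ω) - min 1 (Atop ω) :=
        Eventually.of_forall fun ω => by
          simp only [Pi.zero_apply, sub_nonneg]
          exact min_le_min (by norm_num) le_rfl
      have := (integral_eq_zero_iff_of_nonneg_ae hnn
        ((hint 2 (by norm_num)).sub (hint 1 zero_le_one))).mp hz
      filter_upwards [this] with ω hω
      have : min 2 (Atop ω) - min 1 (Atop ω) = 0 := hω
      linarith
    filter_upwards [step1, step2] with ω e1 e2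
    have e3 : min 2 (Atop ω) = 1 := by rw [e2, e1]
    rcases min_cases 2 (Atop ω) with ⟨hmin, _⟩ | ⟨hmin, _⟩
    · rw [hmin] at e3; norm_num at e3
    · rw [hmin] at e3; exact e3
end

section
/- Under the dual projection property, for every λ > 0 one has λ · E^P[exp(−λ A_σ)] = 1 − E^P[exp(−λ A_∞)]. -/
open MeasureTheory Filter

lemma stmt5_ofReal_arith {a b M : ℝ} (hM : 0 ≤ M) (hab : a ≤ b) :
    ENNReal.ofReal (min b M) - ENNReal.ofReal (min a M)
      = ENNReal.ofReal (min b M - max a 0) := by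
  rcases le_or_gt a M with haM | haM
  · rw [min_eq_left haM]
    have h0 : ENNReal.ofReal a = ENNReal.ofReal (max a 0) := by
      rcases le_or_gt a 0 with ha | ha
      · rw [max_eq_right ha, ENNReal.ofReal_zero, ENNReal.ofReal_eq_zero.2 ha]
      · rw [max_eq_left ha.le]
    rw [h0, ← ENNReal.ofReal_sub _ (le_max_right a 0)]
  · have hb : min b M = M := min_eq_right (le_trans haM.le hab)
    have ha : min a M = M := min_eq_right haM.le
    rw [hb, ha, tsub_self, eq_comm, ENNReal.ofReal_eq_zero]
    have : max a 0 = a := max_eq_left (le_trans hM haM.le)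
    rw [this]
    linarith

/-- Pathwise computation: the exponential integral against the Stieltjes-type measure. -/
lemma stmt5_pathwise {B : NNReal → ℝ} (hmono : Monotone B) (hcont : Continuous B)
    (hB0 : B 0 = 0) {M : ℝ} (hlim : Tendsto B atTop (nhds M))
    (ν : Measure NNReal)
    (hIoc : ∀ a b : NNReal, a ≤ b → ν (Set.Ioc a b) = ENNReal.ofReal (B b - B a))
    (h0 : ν {0} = 0) (huniv : ν Set.univ = ENNReal.ofReal M)
    {l : ℝ} (hl : 0 < l) :
    ∫ u, Real.exp (-(l * max (B u) 0)) ∂ν = (1 - Real.exp (-(l * M))) / l := by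
  have hBnn : ∀ u, 0 ≤ B u := fun u => hB0 ▸ hmono ((zero_le : (0:NNReal) ≤ u))
  have hBM : ∀ u, B u ≤ M := fun u => hmono.ge_of_tendsto hlim u
  have hM0 : 0 ≤ M := le_trans (hBnn 0) (hBM 0)
  -- the measure of sublevel sets
  have hIic : ∀ s : ℝ, ν {u | B u ≤ s} = ENNReal.ofReal (min s M) := by
    intro s
    rcases lt_or_ge s 0 with hs | hs
    · have he : {u | B u ≤ s} = ∅ := by
        ext u; simp only [Set.mem_setOf_eq, Set.mem_empty_iff_false, iff_false, not_le]
        exact lt_of_lt_of_le hs (hBnn u)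
      rw [he, measure_empty, eq_comm, ENNReal.ofReal_eq_zero]
      exact le_trans (min_le_left s M) hs.le
    rcases le_or_gt M s with hMs | hsM
    · have he : {u | B u ≤ s} = Set.univ := by
        ext u; simp only [Set.mem_setOf_eq, Set.mem_univ, iff_true]
        exact le_trans (hBM u) hMs
      rw [he, huniv, min_eq_right hMs]
    · -- main case : 0 ≤ s < M
      set S := {u | B u ≤ s} with hS
      have hSclosed : IsClosed S := IsClosed.preimage hcont isClosed_Iic
      have hSne : S.Nonempty := ⟨0, by simp [hS, hB0, hs]⟩
      obtain ⟨t, ht⟩ : ∃ t, s < B t := (hlim.eventually (eventually_gt_nhds hsM)).exists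
      have hSbdd : BddAbove S := by
        refine ⟨t, fun u hu => ?_⟩
        by_contra hut
        push_neg at hut
        exact absurd (le_trans (hmono hut.le) hu) (not_le.2 ht)
      set τ := sSup S with hτ
      have hτmem : τ ∈ S := hSclosed.csSup_mem hSne hSbdd
      have hSet : S = Set.Iic τ := by
        apply subset_antisymm
        · exact fun u hu => le_csSup hSbdd hu
        · exact fun u hu => le_trans (hmono hu) hτmem
      have hBτ : B τ = s := by
        refine le_antisymm hτmem ?_
        by_contra hlt
        push_neg at hlt
        have hev : ∀ᶠ x in nhds τ, B x < s := (hcont.tendsto τ).eventually (gt_mem_nhds hlt)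
        have hev2 : ∀ᶠ x in nhdsWithin τ (Set.Ioi τ), B x < s :=
          nhdsWithin_le_nhds hev
        obtain ⟨u, hu1, hu2⟩ := (hev2.and self_mem_nhdsWithin).exists
        exact absurd (le_csSup hSbdd (le_of_lt hu1 : B u ≤ s)) (not_le.2 hu2)
      have hsplit : Set.Iic τ = {(0 : NNReal)} ∪ Set.Ioc 0 τ := by
        ext u
        simp only [Set.mem_Iic, Set.mem_union, Set.mem_singleton_iff, Set.mem_Ioc]
        constructor
        · intro hu
          rcases eq_or_lt_of_le ((zero_le : (0:NNReal) ≤ u)) with h | h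
          · exact Or.inl h.symm
          · exact Or.inr ⟨h, hu⟩
        · rintro (rfl | ⟨_, hu⟩)
          · exact (zero_le : (0:NNReal) ≤ τ)
          · exact hu
      have hdisj : Disjoint ({(0 : NNReal)} : Set NNReal) (Set.Ioc 0 τ) := by
        simp [Set.disjoint_left]
      rw [hS] at hSet ⊢
      rw [hSet, hsplit, measure_union hdisj measurableSet_Ioc, h0, zero_add,
        hIoc 0 τ ((zero_le : (0:NNReal) ≤ τ)), hB0, hBτ, sub_zero, min_eq_left hsM.le]
  -- the pushforward of ν under B is Lebesgue measure on (0, M]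
  have hfin : IsFiniteMeasure ν := by
    constructor; rw [huniv]; exact ENNReal.ofReal_lt_top
  have hfinmap : IsFiniteMeasure (ν.map B) := by
    constructor
    rw [Measure.map_apply hcont.measurable MeasurableSet.univ]
    simp only [Set.preimage_univ, huniv]
    exact ENNReal.ofReal_lt_top
  have hmap : ν.map B = volume.restrict (Set.Ioc 0 M) := by
    refine MeasureTheory.Measure.ext_of_Ioc_finite _ _ ?_ ?_
    · rw [Measure.map_apply hcont.measurable MeasurableSet.univ]
      simp only [Set.preimage_univ, huniv]
      rw [Measure.restrict_apply MeasurableSet.univ, Set.univ_inter, Real.volume_Ioc, sub_zero]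
    · intro a b hab
      rw [Measure.map_apply hcont.measurable measurableSet_Ioc,
        Measure.restrict_apply measurableSet_Ioc, Set.Ioc_inter_Ioc, Real.volume_Ioc]
      have hpre : B ⁻¹' Set.Ioc a b = {u | B u ≤ b} \ {u | B u ≤ a} := by
        ext u
        simp only [Set.mem_preimage, Set.mem_Ioc, Set.mem_diff, Set.mem_setOf_eq, not_le]
        tauto
      have hma : ∀ s : ℝ, MeasurableSet {u | B u ≤ s} := fun s =>
        measurableSet_le hcont.measurable measurable_const
      have hd := measure_diff (μ := ν) (s₁ := {u | B u ≤ b}) (s₂ := {u | B u ≤ a})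
        (fun u hu => le_trans hu hab.le) ((hma a).nullMeasurableSet)
        (by rw [hIic]; exact ENNReal.ofReal_ne_top)
      rw [hpre, hd, hIic, hIic]
      exact stmt5_ofReal_arith hM0 hab.le
  -- compute the integral
  have hint : ∫ u, Real.exp (-(l * max (B u) 0)) ∂ν
      = ∫ x in Set.Ioc (0:ℝ) M, Real.exp (-(l * max x 0)) := by
    rw [← hmap, integral_map hcont.measurable.aemeasurable]
    exact (Continuous.aestronglyMeasurable (by fun_prop))
  rw [hint]
  have hcongr : ∫ x in Set.Ioc (0:ℝ) M, Real.exp (-(l * max x 0))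
      = ∫ x in Set.Ioc (0:ℝ) M, Real.exp (-(l * x)) := by
    refine setIntegral_congr_fun measurableSet_Ioc (fun x hx => ?_)
    rw [max_eq_left hx.1.le]
  rw [hcongr, ← intervalIntegral.integral_of_le hM0]
  have hderiv : ∀ x ∈ Set.uIcc (0:ℝ) M,
      HasDerivAt (fun y => -(Real.exp (-(l * y)) / l)) (Real.exp (-(l * x))) x := by
    intro x _
    have h1 : HasDerivAt (fun y : ℝ => l * y) l x := by
      simpa using (hasDerivAt_id x).const_mul l
    have h3 : HasDerivAt (fun y => Real.exp (-(l * y))) (Real.exp (-(l * x)) * -l) x :=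
      h1.neg.exp
    have h4 := (h3.div_const l).neg
    have h5 : -(Real.exp (-(l * x)) * -l / l) = Real.exp (-(l * x)) := by
      field_simp
    exact h5 ▸ h4
  rw [intervalIntegral.integral_eq_sub_of_hasDerivAt hderiv
    ((Continuous.intervalIntegrable (by fun_prop) 0 M))]
  simp only [mul_zero, neg_zero, Real.exp_zero]
  field_simp
  ring

/-- Under the dual projection property (same setting as Statement 4),
for every `λ > 0` one has `λ · E^P[exp(−λ A_σ)] = 1 − E^P[exp(−λ A_∞)]`. -/
theorem stmt_5 {Ω : Type*} {m : MeasurableSpace Ω}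
    (P : Measure Ω) [IsProbabilityMeasure P]
    (σ : Ω → NNReal) (hσ : Measurable σ)
    (A : NNReal → Ω → ℝ)
    (hAmeas : Measurable fun p : NNReal × Ω => A p.1 p.2)
    (Atop : Ω → ℝ)
    (hpath : ∀ᵐ ω ∂P, Monotone (fun t => A t ω) ∧ Continuous (fun t => A t ω) ∧
      A 0 ω = 0 ∧ Tendsto (fun t => A t ω) atTop (nhds (Atop ω)))
    (ν : Ω → Measure NNReal)
    (hν : ∀ᵐ ω ∂P, (∀ a b : NNReal, a ≤ b →
        ν ω (Set.Ioc a b) = ENNReal.ofReal (A b ω - A a ω)) ∧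
      ν ω {0} = 0 ∧ ν ω Set.univ = ENNReal.ofReal (Atop ω))
    (hdual : ∀ f : ℝ → ℝ, Measurable f → (∃ C, ∀ x, |f x| ≤ C) →
      ∫ ω, f (A (σ ω) ω) ∂P = ∫ ω, ∫ u, f (A u ω) ∂(ν ω) ∂P)
    (l : ℝ) (hl : 0 < l) :
    l * ∫ ω, Real.exp (-(l * A (σ ω) ω)) ∂P = 1 - ∫ ω, Real.exp (-(l * Atop ω)) ∂P := by
  set f : ℝ → ℝ := fun x => Real.exp (-(l * max x 0)) with hf
  have hfmeas : Measurable f := by fun_prop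
  have hfbd : ∃ C, ∀ x, |f x| ≤ C := by
    refine ⟨1, fun x => ?_⟩
    rw [abs_of_pos (Real.exp_pos _), Real.exp_le_one_iff]
    exact neg_nonpos.2 (mul_nonneg hl.le (le_max_right _ _))
  have hdual' := hdual f hfmeas hfbd
  -- rewrite LHS integrand
  have hL : ∫ ω, Real.exp (-(l * A (σ ω) ω)) ∂P = ∫ ω, f (A (σ ω) ω) ∂P := by
    refine integral_congr_ae ?_
    filter_upwards [hpath] with ω ⟨hmono, _, hA0, _⟩
    have : (0:ℝ) ≤ A (σ ω) ω := hA0 ▸ hmono ((zero_le : (0:NNReal) ≤ (σ ω)))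
    simp [hf, max_eq_left this]
  -- rewrite RHS via the pathwise computation
  have hR : ∫ ω, ∫ u, f (A u ω) ∂(ν ω) ∂P
      = ∫ ω, (1 - Real.exp (-(l * Atop ω))) / l ∂P := by
    refine integral_congr_ae ?_
    filter_upwards [hpath, hν] with ω ⟨hmono, hcont, hA0, hlim⟩ ⟨hIoc, h0, huniv⟩
    exact stmt5_pathwise hmono hcont hA0 hlim (ν ω) hIoc h0 huniv hl
  rw [hL, hdual', hR, integral_div, mul_div_cancel₀ _ (ne_of_gt hl)]
  -- Atop is a.e. nonnegative and a.e. measurable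
  have hAnmeas : ∀ n : ℕ, Measurable fun ω => A (n : NNReal) ω := fun n =>
    hAmeas.comp (measurable_const.prodMk measurable_id)
  have hAE : AEMeasurable Atop P := by
    refine aemeasurable_of_tendsto_metrizable_ae atTop
      (fun n : ℕ => (hAnmeas n).aemeasurable) ?_
    filter_upwards [hpath] with ω ⟨_, _, _, hlim⟩
    exact hlim.comp (tendsto_natCast_atTop_atTop)
  have hAtopnn : ∀ᵐ ω ∂P, 0 ≤ Atop ω := by
    filter_upwards [hpath] with ω ⟨hmono, _, hA0, hlim⟩
    exact ge_of_tendsto' hlim (fun t => hA0 ▸ hmono ((zero_le : (0:NNReal) ≤ t)))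
  have hintexp : Integrable (fun ω => Real.exp (-(l * Atop ω))) P := by
    refine Integrable.mono' (integrable_const 1)
      (Real.measurable_exp.comp_aemeasurable ((hAE.const_mul l).neg)).aestronglyMeasurable ?_
    filter_upwards [hAtopnn] with ω hω
    rw [Real.norm_eq_abs, abs_of_pos (Real.exp_pos _), Real.exp_le_one_iff]
    exact neg_nonpos.2 (mul_nonneg hl.le hω)
  rw [integral_sub (integrable_const 1) hintexp]
  simp
end

section
/- Assume additionally that A is (F_t)-adapted, that A_∞ = 1 P-a.s., and the conditional dual projection property: for every bounded measurable f : ℝ → ℝ and every t ≥ 0, E^P[f(A_σ)·1_{σ>t} | F_t] = E^P[∫_{(t,∞)} f(A_u) dA_u | F_t] P-a.s. Then for every bounded measurable f : ℝ → ℝ and every t ≥ 0, P-almost surely E^P[f(A_σ)·1_{σ>t} | F_t] = ∫_{A_t}^{1} f(x) dx (Lebesgue integral). -/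
open MeasureTheory Filter

lemma key_map (φ : NNReal → ℝ) (hmono : Monotone φ) (hcont : Continuous φ)
    (hφ0 : φ 0 = 0) (hlim : Tendsto φ atTop (nhds 1))
    (ν : Measure NNReal)
    (hIoc : ∀ a b : NNReal, a ≤ b → ν (Set.Ioc a b) = ENNReal.ofReal (φ b - φ a))
    (h0 : ν {0} = 0) (huniv : ν Set.univ = 1) (t : NNReal) :
    Measure.map φ (ν.restrict (Set.Ioi t)) = volume.restrict (Set.Ioc (φ t) 1) := by
  haveI : IsFiniteMeasure ν := ⟨by rw [huniv]; exact ENNReal.one_lt_top⟩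
  have hφle1 : ∀ u, φ u ≤ 1 := fun u =>
    ge_of_tendsto hlim (Filter.eventually_atTop.2 ⟨u, fun v hv => hmono hv⟩)
  have hφ0le : ∀ u, 0 ≤ φ u := fun u => hφ0 ▸ hmono (zero_le : 0 ≤ u)
  have hIic : ∀ s : NNReal, ν (Set.Iic s) = ENNReal.ofReal (φ s) := by
    intro s
    have hset : Set.Iic s = {0} ∪ Set.Ioc 0 s := by
      ext u
      simp only [Set.mem_Iic, Set.mem_union, Set.mem_singleton_iff, Set.mem_Ioc]
      constructor
      · intro h
        rcases eq_or_ne u 0 with h0 | h0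
        · exact Or.inl h0
        · exact Or.inr ⟨zero_lt_iff.mpr h0, h⟩
      · rintro (rfl | ⟨_, h⟩)
        · exact zero_le
        · exact h
    rw [hset, measure_union _ measurableSet_Ioc, h0, hIoc 0 s zero_le, hφ0, sub_zero,
      zero_add]
    · simp [Set.disjoint_left]
  have hIoi : ∀ s : NNReal, ν (Set.Ioi s) = ENNReal.ofReal (1 - φ s) := by
    intro s
    have hc := measure_compl (μ := ν) (measurableSet_Iic (a := s)) (measure_ne_top ν _)
    rw [Set.compl_Iic] at hc
    rw [hc, huniv, hIic, ← ENNReal.ofReal_one, ← ENNReal.ofReal_sub _ (hφ0le s)]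
  refine Measure.ext_of_Iic _ _ (fun x => ?_)
  rw [Measure.map_apply hcont.measurable measurableSet_Iic,
    Measure.restrict_apply (hcont.measurable measurableSet_Iic),
    Measure.restrict_apply measurableSet_Iic]
  rcases lt_or_ge x (φ t) with hx | hx
  · have h1 : φ ⁻¹' Set.Iic x ∩ Set.Ioi t = ∅ := by
      refine Set.eq_empty_iff_forall_notMem.2 ?_
      rintro u ⟨hu, hut⟩
      exact absurd (hmono (le_of_lt hut)) (not_le.2 (lt_of_le_of_lt hu hx))
    have h2 : Set.Iic x ∩ Set.Ioc (φ t) 1 = ∅ := by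
      refine Set.eq_empty_iff_forall_notMem.2 ?_
      rintro y ⟨hy, h1, _⟩
      exact absurd (lt_of_lt_of_le h1 hy) (not_lt.2 hx.le)
    rw [h1, h2, measure_empty, measure_empty]
  rcases le_or_gt 1 x with hx1 | hx1
  · have h1 : φ ⁻¹' Set.Iic x ∩ Set.Ioi t = Set.Ioi t := by
      rw [Set.inter_eq_right]
      intro u _
      exact le_trans (hφle1 u) hx1
    have h2 : Set.Iic x ∩ Set.Ioc (φ t) 1 = Set.Ioc (φ t) 1 := by
      rw [Set.inter_eq_right]
      intro y hy
      exact le_trans hy.2 hx1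
    rw [h1, h2, hIoi, Real.volume_Ioc]
  · -- φ t ≤ x < 1
    obtain ⟨u₀, hu₀⟩ : ∃ u₀, x < φ u₀ := by
      have := hlim.eventually (eventually_gt_nhds hx1)
      exact (this.and (Filter.eventually_atTop.2 ⟨0, fun _ _ => trivial⟩)).exists.imp
        fun u h => h.1
    have htu₀ : t ≤ u₀ := by
      by_contra h
      exact absurd (hmono (not_le.1 h).le) (not_le.2 (lt_of_le_of_lt hx hu₀))
    obtain ⟨s', hs'mem, hs'⟩ : ∃ s' ∈ Set.Icc t u₀, φ s' = x :=
      intermediate_value_Icc htu₀ hcont.continuousOn ⟨hx, hu₀.le⟩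
    set D : Set NNReal := φ ⁻¹' Set.Iic x with hD
    have hDclosed : IsClosed D := IsClosed.preimage hcont isClosed_Iic
    have hDne : D.Nonempty := ⟨t, hx⟩
    have hDbdd : BddAbove D := ⟨u₀, fun u hu => by
      by_contra h
      exact absurd hu (not_le.2 (lt_of_lt_of_le hu₀ (hmono (not_le.1 h).le)))⟩
    set s := sSup D with hs
    have hsD : s ∈ D := hDclosed.csSup_mem hDne hDbdd
    have hts : t ≤ s := le_csSup hDbdd hx
    have hφs : φ s = x :=
      le_antisymm hsD (hs' ▸ hmono (le_csSup hDbdd (show s' ∈ D from hs'.le)))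
    have h1 : D ∩ Set.Ioi t = Set.Ioc t s := by
      ext u
      simp only [Set.mem_inter_iff, Set.mem_Ioi, Set.mem_Ioc]
      constructor
      · exact fun h => ⟨h.2, le_csSup hDbdd h.1⟩
      · exact fun h => ⟨le_trans (hmono h.2) hsD, h.1⟩
    have h2 : Set.Iic x ∩ Set.Ioc (φ t) 1 = Set.Ioc (φ t) x := by
      ext y
      simp only [Set.mem_inter_iff, Set.mem_Iic, Set.mem_Ioc]
      exact ⟨fun h => ⟨h.2.1, h.1⟩, fun h => ⟨h.2, h.1, le_trans h.2 hx1.le⟩⟩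
    rw [h1, h2, hIoc t s hts, hφs, Real.volume_Ioc]

lemma key_int (φ : NNReal → ℝ) (hmono : Monotone φ) (hcont : Continuous φ)
    (hφ0 : φ 0 = 0) (hlim : Tendsto φ atTop (nhds 1))
    (ν : Measure NNReal)
    (hIoc : ∀ a b : NNReal, a ≤ b → ν (Set.Ioc a b) = ENNReal.ofReal (φ b - φ a))
    (h0 : ν {0} = 0) (huniv : ν Set.univ = 1) (t : NNReal)
    (f : ℝ → ℝ) (hf : Measurable f) :
    ∫ u in Set.Ioi t, f (φ u) ∂ν = ∫ x in (φ t)..1, f x := by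
  have hmap := key_map φ hmono hcont hφ0 hlim ν hIoc h0 huniv t
  have hφt1 : φ t ≤ 1 :=
    ge_of_tendsto hlim (Filter.eventually_atTop.2 ⟨t, fun v hv => hmono hv⟩)
  rw [intervalIntegral.integral_of_le hφt1]
  calc ∫ u in Set.Ioi t, f (φ u) ∂ν
      = ∫ y, f y ∂(Measure.map φ (ν.restrict (Set.Ioi t))) :=
        (integral_map hcont.measurable.aemeasurable
          hf.stronglyMeasurable.aestronglyMeasurable).symm
    _ = ∫ x in Set.Ioc (φ t) 1, f x := by rw [hmap]

/-- In the setting of Statement 4, assume additionally that `A` is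
`(ℱ t)`-adapted, that `A_∞ = 1` `P`-a.s., and the conditional dual projection property:
for every bounded measurable `f` and every `t ≥ 0`,
`E[f(A_σ)·1_{σ>t} | ℱ t] = E[∫_{(t,∞)} f(A_u) dA_u | ℱ t]` `P`-a.s.
Then for every bounded measurable `f` and every `t ≥ 0`, `P`-almost surely
`E[f(A_σ)·1_{σ>t} | ℱ t] = ∫_{A_t}^{1} f(x) dx` (Lebesgue integral). -/
theorem stmt_6 {Ω : Type*} {m : MeasurableSpace Ω}
    (P : Measure Ω) [IsProbabilityMeasure P]
    (ℱ : Filtration NNReal m)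
    (σ : Ω → NNReal) (hσ : Measurable σ)
    (A : NNReal → Ω → ℝ)
    (hAmeas : Measurable fun p : NNReal × Ω => A p.1 p.2)
    (hAadapted : ∀ t : NNReal, StronglyMeasurable[ℱ t] (A t))
    (Atop : Ω → ℝ)
    (hpath : ∀ᵐ ω ∂P, Monotone (fun t => A t ω) ∧ Continuous (fun t => A t ω) ∧
      A 0 ω = 0 ∧ Tendsto (fun t => A t ω) atTop (nhds (Atop ω)))
    (hAtop : ∀ᵐ ω ∂P, Atop ω = 1)
    (ν : Ω → Measure NNReal)
    (hν : ∀ᵐ ω ∂P, (∀ a b : NNReal, a ≤ b →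
        ν ω (Set.Ioc a b) = ENNReal.ofReal (A b ω - A a ω)) ∧
      ν ω {0} = 0 ∧ ν ω Set.univ = ENNReal.ofReal (Atop ω))
    (hdual : ∀ f : ℝ → ℝ, Measurable f → (∃ C, ∀ x, |f x| ≤ C) → ∀ t : NNReal,
      P[fun ω => f (A (σ ω) ω) * Set.indicator {ω' | t < σ ω'} (fun _ => (1 : ℝ)) ω | ℱ t]
        =ᵐ[P] P[fun ω => ∫ u in Set.Ioi t, f (A u ω) ∂(ν ω) | ℱ t]) :
    ∀ f : ℝ → ℝ, Measurable f → (∃ C, ∀ x, |f x| ≤ C) → ∀ t : NNReal,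
      P[fun ω => f (A (σ ω) ω) * Set.indicator {ω' | t < σ ω'} (fun _ => (1 : ℝ)) ω | ℱ t]
        =ᵐ[P] fun ω => ∫ x in (A t ω)..1, f x := by
  intro f hf hCex t
  obtain ⟨C, hC⟩ := hCex
  have hC0 : 0 ≤ C := le_trans (abs_nonneg _) (hC 0)
  -- a.e. pointwise identification of the integrand
  have hae : (fun ω => ∫ u in Set.Ioi t, f (A u ω) ∂(ν ω))
      =ᵐ[P] (fun ω => ∫ x in (A t ω)..1, f x) := by
    filter_upwards [hpath, hAtop, hν] with ω hp hta hn
    obtain ⟨hmono, hcont, h0, hlim⟩ := hp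
    exact key_int (fun u => A u ω) hmono hcont h0 (hta ▸ hlim) (ν ω) hn.1 hn.2.1
      (by rw [hn.2.2, hta, ENNReal.ofReal_one]) t f hf
  -- the target function is ℱ t-measurable and integrable
  have hint_f : ∀ a b : ℝ, IntervalIntegrable f volume a b := by
    intro a b
    constructor <;>
    · refine Integrable.mono' (integrable_const C)
        (hf.stronglyMeasurable.aestronglyMeasurable) ?_
      exact Filter.Eventually.of_forall fun x => (Real.norm_eq_abs _) ▸ hC x
  have hcont_prim : Continuous fun a : ℝ => ∫ x in a..1, f x := by
    have h1 : (fun a : ℝ => ∫ x in a..1, f x) = fun a : ℝ => -∫ x in (1:ℝ)..a, f x := by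
      funext a
      rw [intervalIntegral.integral_symm]
    rw [h1]
    exact (intervalIntegral.continuous_primitive hint_f 1).neg
  set g : Ω → ℝ := fun ω => ∫ x in (A t ω)..1, f x with hg
  have hgsm : StronglyMeasurable[ℱ t] g :=
    hcont_prim.comp_stronglyMeasurable (hAadapted t)
  have hgint : Integrable g P := by
    refine Integrable.mono' (integrable_const C)
      ((hgsm.mono (ℱ.le t)).aestronglyMeasurable) ?_
    filter_upwards [hpath, hAtop] with ω hp hta
    obtain ⟨hmono, hcont, h0, hlim⟩ := hp
    have hA0 : 0 ≤ A t ω := h0 ▸ hmono (zero_le : 0 ≤ t)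
    have hA1 : A t ω ≤ 1 := by
      rw [← hta]
      exact ge_of_tendsto hlim (Filter.eventually_atTop.2 ⟨t, fun v hv => hmono hv⟩)
    have hb := intervalIntegral.norm_integral_le_of_norm_le_const
      (a := A t ω) (b := 1) (C := C) (f := f)
      (fun x _ => (Real.norm_eq_abs _) ▸ hC x)
    refine le_trans hb ?_
    have : |1 - A t ω| ≤ 1 := by
      rw [abs_of_nonneg (by linarith)]
      linarith
    calc C * |1 - A t ω| ≤ C * 1 := by
          exact mul_le_mul_of_nonneg_left this hC0
      _ = C := mul_one C
  refine ((hdual f hf ⟨C, hC⟩ t).trans (condExp_congr_ae hae)).trans ?_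
  rw [condExp_of_stronglyMeasurable (ℱ.le t) hgsm hgint]
end

section
/- Let σ be a random time with P(σ < ∞) = 1 and let M = (M_t)_{t≥0} be an (F_t)-adapted process such that M_σ (defined by ω ↦ M_{σ(ω)}(ω)) and each M_t are P-integrable, and suppose that for each t ≥ 0, E^P[M_σ | G_t] = M_{t∧σ} P-a.s. (as holds when σ is a pseudo-stopping time and M a uniformly integrable martingale). Then for every t ≥ 0, P-almost surely, E^P[M_σ·1_{σ>t} | F_t] = M_t · Z_t. -/
open MeasureTheory

/-- Let `σ` be a random time with `P(σ < ∞) = 1` and `M` an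
`(ℱ t)`-adapted process such that `M_σ` and each `M t` are integrable and
`E^P[M_σ | 𝒢 t] = M_{t∧σ}` `P`-a.s. for each `t`.  Then for every `t ≥ 0`, `P`-a.s.,
`E^P[M_σ·1_{σ>t} | ℱ t] = M t · Z t`, where `Z t = P(σ > t | ℱ t)`. -/
theorem stmt_7 {Ω : Type*} {m : MeasurableSpace Ω}
    (P : Measure Ω) [IsProbabilityMeasure P]
    (ℱ : Filtration NNReal m)
    (σ : Ω → ENNReal) (hσ : Measurable σ)
    (hσfin : ∀ᵐ ω ∂P, σ ω ≠ ⊤)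
    (G : NNReal → MeasurableSpace Ω)
    (hG : ∀ t : NNReal, G t = (ℱ t : MeasurableSpace Ω) ⊔
      MeasurableSpace.generateFrom
        {s : Set Ω | ∃ r : NNReal, r ≤ t ∧ s = {ω | (r : ENNReal) < σ ω}})
    (M : NNReal → Ω → ℝ)
    (hMadapted : ∀ t : NNReal, StronglyMeasurable[ℱ t] (M t))
    (hMσint : Integrable (fun ω => M (σ ω).toNNReal ω) P)
    (hMint : ∀ t : NNReal, Integrable (M t) P)
    (hcond : ∀ t : NNReal,
      P[fun ω => M (σ ω).toNNReal ω | G t] =ᵐ[P] fun ω => M (min t (σ ω).toNNReal) ω)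
    (t : NNReal) :
    P[fun ω => M (σ ω).toNNReal ω * Set.indicator {ω' | (t : ENNReal) < σ ω'} (fun _ => (1 : ℝ)) ω | ℱ t]
      =ᵐ[P] fun ω => M t ω *
        (P[Set.indicator {ω' | (t : ENNReal) < σ ω'} (fun _ => (1 : ℝ)) | ℱ t]) ω := by

  classical
  set f : Ω → ℝ := fun ω => M (σ ω).toNNReal ω with hf
  set ind : Ω → ℝ := Set.indicator {ω' | (t : ENNReal) < σ ω'} (fun _ => (1 : ℝ)) with hind
  have hset : MeasurableSet {ω | (t : ENNReal) < σ ω} :=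
    measurableSet_lt measurable_const hσ
  have hGle : G t ≤ m := by
    rw [hG]
    refine sup_le (ℱ.le t) (MeasurableSpace.generateFrom_le ?_)
    rintro s ⟨r, hr, rfl⟩
    exact measurableSet_lt measurable_const hσ
  have hFG : (ℱ t : MeasurableSpace Ω) ≤ G t := by rw [hG]; exact le_sup_left
  have hsetG : MeasurableSet[G t] {ω | (t : ENNReal) < σ ω} := by
    rw [hG]
    exact (le_sup_right : _ ≤ (ℱ t : MeasurableSpace Ω) ⊔ _) _
      (MeasurableSpace.measurableSet_generateFrom ⟨t, le_rfl, rfl⟩)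
  have hindG : StronglyMeasurable[G t] ind :=
    stronglyMeasurable_const.indicator hsetG
  have hind_bd : ∃ C, ∀ ω, ‖ind ω‖ ≤ C := by
    refine ⟨1, fun ω => ?_⟩
    by_cases h : ω ∈ {ω' | (t : ENNReal) < σ ω'}
    · simp [hind, Set.indicator_of_mem h]
    · simp [hind, Set.indicator_of_notMem h]
  have hind_int : Integrable ind P :=
    (integrable_const (1 : ℝ)).indicator hset
  have hprod_int : Integrable (ind * f) P :=
    hMσint.bdd_mul (hindG.mono hGle).aestronglyMeasurable (Filter.Eventually.of_forall hind_bd.choose_spec)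
  have hcomm : (fun ω => f ω * ind ω) = ind * f := by
    funext ω; exact mul_comm _ _
  have h2 : P[ind * f | G t] =ᵐ[P] fun ω => ind ω * M (min t (σ ω).toNNReal) ω := by
    have h := condExp_mul_of_stronglyMeasurable_left hindG hprod_int hMσint
    refine h.trans ?_
    filter_upwards [hcond t] with ω hω
    simp only [Pi.mul_apply, hω]
  have h3 : (fun ω => ind ω * M (min t (σ ω).toNNReal) ω) =ᵐ[P]
      fun ω => ind ω * M t ω := by
    filter_upwards [hσfin] with ω hω
    by_cases h : ω ∈ {ω' | (t : ENNReal) < σ ω'}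
    · have ht : t ≤ (σ ω).toNNReal := by
        have h2 : (t : ENNReal) < ((σ ω).toNNReal : ENNReal) := by
          rw [ENNReal.coe_toNNReal hω]; exact h
        exact_mod_cast h2.le
      rw [min_eq_left ht]
    · have h0 : ind ω = 0 := Set.indicator_of_notMem h _
      simp [h0]
  have h4 : P[fun ω => f ω * ind ω | ℱ t] =ᵐ[P] P[fun ω => ind ω * M t ω | ℱ t] := by
    calc P[fun ω => f ω * ind ω | ℱ t]
        =ᵐ[P] P[P[fun ω => f ω * ind ω | G t] | ℱ t] :=
          (condExp_condExp_of_le hFG hGle).symm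
      _ =ᵐ[P] P[fun ω => ind ω * M t ω | ℱ t] := by
          refine condExp_congr_ae ?_
          refine (condExp_congr_ae (by rw [hcomm] : (fun ω => f ω * ind ω) =ᵐ[P] ind * f)).trans ?_
          exact h2.trans h3
  have hprod2_int : Integrable ((M t) * ind) P := by
    have h := (hMint t).bdd_mul (hindG.mono hGle).aestronglyMeasurable (Filter.Eventually.of_forall hind_bd.choose_spec)
    refine h.congr ?_
    filter_upwards with ω using mul_comm _ _
  have h5 : P[(M t) * ind | ℱ t] =ᵐ[P] (M t) * P[ind | ℱ t] :=
    condExp_mul_of_stronglyMeasurable_left (hMadapted t) hprod2_int hind_int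
  have hcomm2 : (fun ω => ind ω * M t ω) = (M t) * ind := by
    funext ω; exact mul_comm _ _
  refine h4.trans ?_
  rw [hcomm2]
  exact h5
end

section
/- Let σ be a random time such that Z_t > 0 P-a.s. for every t ≥ 0. Then the process ρ̃_t := 1_{σ>t} / Z_t is a (P, G_t)-martingale: each ρ̃_t is G_t-measurable and P-integrable, and for all 0 ≤ s ≤ t, E^P[ρ̃_t | G_s] = ρ̃_s P-a.s. -/
open MeasureTheory Filter Topology

lemma bdd_integrable {Ω : Type*} {m : MeasurableSpace Ω} (P : Measure Ω) [IsProbabilityMeasure P]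
    {f : Ω → ℝ} (hf : AEStronglyMeasurable f P) (C : ℝ) (hb : ∀ ω, ‖f ω‖ ≤ C) :
    Integrable f P :=
  Integrable.mono' (integrable_const C) hf (Filter.Eventually.of_forall hb)

lemma key {Ω : Type*} {m : MeasurableSpace Ω} (P : Measure Ω) [IsProbabilityMeasure P]
    (mt : MeasurableSpace Ω) (hmt : mt ≤ m)
    (Z : Ω → ℝ) (hZmeas : StronglyMeasurable[mt] Z)
    (D : Set Ω) (hD : MeasurableSet[m] D)
    (hZver : Z =ᵐ[P] P[D.indicator (fun _ => (1 : ℝ)) | mt])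
    (hZpos : ∀ᵐ ω ∂P, 0 < Z ω) :
    Integrable (fun ω => D.indicator (fun _ => (1 : ℝ)) ω / Z ω) P ∧
    ∀ A' : Set Ω, MeasurableSet[mt] A' →
      ∫ ω, (D.indicator (fun _ => (1 : ℝ)) ω / Z ω) * A'.indicator (fun _ => (1 : ℝ)) ω ∂P
        = (P A').toReal := by
  haveI : SigmaFinite (P.trim hmt) := (isFiniteMeasure_trim hmt).toSigmaFinite
  set ID : Ω → ℝ := D.indicator (fun _ => (1 : ℝ)) with hIDdef
  set ρ' : Ω → ℝ := fun ω => ID ω / Z ω with hρ'def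
  set h : ℕ → Ω → ℝ := fun n ω => max 0 (min (Z ω)⁻¹ (n : ℝ)) with hhdef
  have hZm : Measurable[mt] Z := hZmeas.measurable
  have hhmeas : ∀ n, StronglyMeasurable[mt] (h n) := fun n =>
    (measurable_const.max (hZm.inv.min measurable_const)).stronglyMeasurable
  have hID01 : ∀ ω, 0 ≤ ID ω ∧ ID ω ≤ 1 := by
    intro ω; by_cases hω : ω ∈ D <;> simp [hIDdef, Set.indicator_apply, hω]
  have hIDmeas : Measurable[m] ID := measurable_const.indicator hD
  have hID_int : Integrable ID P := by
    refine bdd_integrable P hIDmeas.aestronglyMeasurable 1 fun ω => ?_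
    rw [Real.norm_eq_abs, abs_le]
    exact ⟨by linarith [(hID01 ω).1], (hID01 ω).2⟩
  have hn_nonneg : ∀ n ω, 0 ≤ h n ω := fun n ω => le_max_left 0 _
  have hn_le_n : ∀ n ω, h n ω ≤ (n : ℝ) := fun n ω =>
    max_le (Nat.cast_nonneg n) (min_le_right _ _)
  have hhn_le : ∀ n ω, 0 < Z ω → h n ω ≤ (Z ω)⁻¹ := fun n ω h0 =>
    max_le (inv_nonneg.mpr h0.le) (min_le_left _ _)
  have hZh_le_one : ∀ n ω, 0 < Z ω → Z ω * h n ω ≤ 1 := by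
    intro n ω h0
    calc Z ω * h n ω ≤ Z ω * (Z ω)⁻¹ :=
          mul_le_mul_of_nonneg_left (hhn_le n ω h0) h0.le
      _ = 1 := mul_inv_cancel₀ h0.ne'
  have htend : ∀ ω, 0 < Z ω → Tendsto (fun n => h n ω) atTop (𝓝 (Z ω)⁻¹) := by
    intro ω h0
    obtain ⟨N, hN⟩ := exists_nat_ge (Z ω)⁻¹
    refine tendsto_atTop_of_eventually_const (i₀ := N) fun n hn => ?_
    have h1 : (Z ω)⁻¹ ≤ (n : ℝ) := hN.trans (Nat.cast_le.mpr hn)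
    simp [hhdef, min_eq_left h1, max_eq_right (inv_nonneg.mpr h0.le)]
  -- Claim 1
  have claim1 : ∀ (n : ℕ) (A' : Set Ω), MeasurableSet[mt] A' →
      ∫ ω, (h n ω * A'.indicator (fun _ => (1 : ℝ)) ω) * ID ω ∂P
        = ∫ ω, (h n ω * A'.indicator (fun _ => (1 : ℝ)) ω) * Z ω ∂P := by
    intro n A' hA'
    set f : Ω → ℝ := fun ω => h n ω * A'.indicator (fun _ => (1 : ℝ)) ω with hfdef
    have hIA01 : ∀ ω, 0 ≤ A'.indicator (fun _ => (1 : ℝ)) ω ∧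
        A'.indicator (fun _ => (1 : ℝ)) ω ≤ 1 := by
      intro ω; by_cases hω : ω ∈ A' <;> simp [Set.indicator_apply, hω]
    have hfm : StronglyMeasurable[mt] f :=
      (hhmeas n).mul (stronglyMeasurable_const.indicator hA')
    have hfb : ∀ ω, ‖f ω‖ ≤ (n : ℝ) := by
      intro ω
      rw [Real.norm_eq_abs, abs_of_nonneg (mul_nonneg (hn_nonneg n ω) (hIA01 ω).1)]
      calc h n ω * A'.indicator (fun _ => (1 : ℝ)) ω ≤ h n ω * 1 :=
            mul_le_mul_of_nonneg_left (hIA01 ω).2 (hn_nonneg n ω)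
        _ = h n ω := mul_one _
        _ ≤ (n : ℝ) := hn_le_n n ω
    have hfmm : Measurable[m] f := (hfm.mono hmt).measurable
    have hfID_int : Integrable (f * ID) P := by
      refine bdd_integrable P (hfmm.mul hIDmeas).aestronglyMeasurable (n : ℝ) fun ω => ?_
      calc ‖(f * ID) ω‖ = ‖f ω‖ * ‖ID ω‖ := by rw [Pi.mul_apply, norm_mul]
        _ ≤ (n : ℝ) * 1 := by
            refine mul_le_mul (hfb ω) ?_ (norm_nonneg _) (Nat.cast_nonneg n)
            rw [Real.norm_eq_abs, abs_of_nonneg (hID01 ω).1]; exact (hID01 ω).2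
        _ = (n : ℝ) := mul_one _
    have hpull := condExp_mul_of_stronglyMeasurable_left (μ := P) hfm hfID_int hID_int
    calc ∫ ω, f ω * ID ω ∂P = ∫ ω, (f * ID) ω ∂P := rfl
      _ = ∫ ω, (P[f * ID|mt]) ω ∂P := (integral_condExp hmt).symm
      _ = ∫ ω, f ω * (P[ID|mt]) ω ∂P := integral_congr_ae (hpull.mono fun ω hω => by
            rw [hω, Pi.mul_apply])
      _ = ∫ ω, f ω * Z ω ∂P := integral_congr_ae (hZver.mono fun ω hω => by
            show f ω * (P[ID|mt]) ω = f ω * Z ω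
            rw [hω])
  -- integrability
  have hunivIA : ∀ ω, (Set.univ : Set Ω).indicator (fun _ => (1 : ℝ)) ω = 1 := by
    intro ω; simp
  have hg_int : ∀ n, Integrable (fun ω => h n ω * ID ω) P := by
    intro n
    refine bdd_integrable P
      ((((hhmeas n).mono hmt).measurable.mul hIDmeas).aestronglyMeasurable) (n : ℝ) fun ω => ?_
    rw [Real.norm_eq_abs, abs_of_nonneg (mul_nonneg (hn_nonneg n ω) (hID01 ω).1)]
    calc h n ω * ID ω ≤ h n ω * 1 := mul_le_mul_of_nonneg_left (hID01 ω).2 (hn_nonneg n ω)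
      _ ≤ (n : ℝ) := by rw [mul_one]; exact hn_le_n n ω
  have hint_le : ∀ n, ∫ ω, h n ω * ID ω ∂P ≤ 1 := by
    intro n
    have h1 := claim1 n Set.univ MeasurableSet.univ
    simp only [hunivIA, mul_one] at h1
    rw [h1]
    have hZ_int : Integrable Z P := integrable_condExp.congr hZver.symm
    have hZint : Integrable (fun ω => h n ω * Z ω) P :=
      hZ_int.bdd_mul (((hhmeas n).mono hmt).measurable.aestronglyMeasurable)
        (c := (n : ℝ)) (Filter.Eventually.of_forall fun ω => by
          rw [Real.norm_eq_abs, abs_of_nonneg (hn_nonneg n ω)]; exact hn_le_n n ω)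
    calc ∫ ω, h n ω * Z ω ∂P ≤ ∫ _ω, (1 : ℝ) ∂P := by
          refine integral_mono_ae hZint (integrable_const 1) ?_
          filter_upwards [hZpos] with ω h0
          rw [mul_comm]; exact hZh_le_one n ω h0
      _ = 1 := by simp
  have hρ'_nonneg : ∀ᵐ ω ∂P, 0 ≤ ρ' ω := by
    filter_upwards [hZpos] with ω h0
    exact div_nonneg (hID01 ω).1 h0.le
  have hρ'meas : Measurable[m] ρ' := hIDmeas.div ((hZmeas.mono hmt).measurable)
  have hg_tend : ∀ᵐ ω ∂P, Tendsto (fun n => h n ω * ID ω) atTop (𝓝 (ρ' ω)) := by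
    filter_upwards [hZpos] with ω h0
    have := (htend ω h0).mul_const (ID ω)
    rwa [show (Z ω)⁻¹ * ID ω = ρ' ω by rw [hρ'def]; dsimp; rw [div_eq_mul_inv, mul_comm]] at this
  have hρ'_int : Integrable ρ' P := by
    refine ⟨hρ'meas.aestronglyMeasurable, ?_⟩
    have hfatou : ∫⁻ ω, ENNReal.ofReal (ρ' ω) ∂P ≤ 1 := by
      have hcv : ∀ᵐ ω ∂P,
          ENNReal.ofReal (ρ' ω) = liminf (fun n => ENNReal.ofReal (h n ω * ID ω)) atTop := by
        filter_upwards [hg_tend] with ω hω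
        exact ((ENNReal.continuous_ofReal.continuousAt.tendsto.comp hω).liminf_eq).symm
      calc ∫⁻ ω, ENNReal.ofReal (ρ' ω) ∂P
          = ∫⁻ ω, liminf (fun n => ENNReal.ofReal (h n ω * ID ω)) atTop ∂P :=
            lintegral_congr_ae hcv
        _ ≤ liminf (fun n => ∫⁻ ω, ENNReal.ofReal (h n ω * ID ω) ∂P) atTop :=
            lintegral_liminf_le' fun n =>
              (ENNReal.measurable_ofReal.comp
                ((((hhmeas n).mono hmt).measurable).mul hIDmeas)).aemeasurable
        _ ≤ liminf (fun _n : ℕ => (1 : ENNReal)) atTop := by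
            refine Filter.liminf_le_liminf (Filter.Eventually.of_forall fun n => ?_)
            rw [← ofReal_integral_eq_lintegral_ofReal (hg_int n)
              (Filter.Eventually.of_forall fun ω => mul_nonneg (hn_nonneg n ω) (hID01 ω).1)]
            calc ENNReal.ofReal (∫ ω, h n ω * ID ω ∂P) ≤ ENNReal.ofReal 1 :=
                  ENNReal.ofReal_le_ofReal (hint_le n)
              _ = 1 := ENNReal.ofReal_one
        _ = 1 := liminf_const 1
    have hnorm : ∫⁻ ω, ‖ρ' ω‖ₑ ∂P = ∫⁻ ω, ENNReal.ofReal (ρ' ω) ∂P := by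
      refine lintegral_congr_ae ?_
      filter_upwards [hρ'_nonneg] with ω h0
      rw [Real.enorm_eq_ofReal h0]
    rw [HasFiniteIntegral, hnorm]
    exact lt_of_le_of_lt hfatou ENNReal.one_lt_top
  refine ⟨hρ'_int, ?_⟩
  intro A' hA'
  set IA : Ω → ℝ := A'.indicator (fun _ => (1 : ℝ)) with hIAdef
  have hIA01 : ∀ ω, 0 ≤ IA ω ∧ IA ω ≤ 1 := by
    intro ω; by_cases hω : ω ∈ A' <;> simp [hIAdef, Set.indicator_apply, hω]
  have hIAmeas : Measurable[m] IA := measurable_const.indicator (hmt A' hA')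
  -- LHS tendsto
  have tendL : Tendsto (fun n => ∫ ω, (h n ω * IA ω) * ID ω ∂P) atTop
      (𝓝 (∫ ω, ρ' ω * IA ω ∂P)) := by
    refine tendsto_integral_of_dominated_convergence ρ'
      (fun n => ((((hhmeas n).mono hmt).measurable.mul hIAmeas).mul
        hIDmeas).aestronglyMeasurable) hρ'_int ?_ ?_
    · intro n
      filter_upwards [hZpos] with ω h0
      have hnn : 0 ≤ (h n ω * IA ω) * ID ω :=
        mul_nonneg (mul_nonneg (hn_nonneg n ω) (hIA01 ω).1) (hID01 ω).1
      rw [Real.norm_eq_abs, abs_of_nonneg hnn]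
      have h1 : h n ω * IA ω ≤ (Z ω)⁻¹ := by
        calc h n ω * IA ω ≤ h n ω * 1 :=
              mul_le_mul_of_nonneg_left (hIA01 ω).2 (hn_nonneg n ω)
          _ = h n ω := mul_one _
          _ ≤ (Z ω)⁻¹ := hhn_le n ω h0
      calc (h n ω * IA ω) * ID ω ≤ (Z ω)⁻¹ * ID ω :=
            mul_le_mul_of_nonneg_right h1 (hID01 ω).1
        _ = ρ' ω := by rw [hρ'def]; dsimp; rw [div_eq_mul_inv, mul_comm]
    · filter_upwards [hZpos] with ω h0
      have h2 : Tendsto (fun n => (h n ω * IA ω) * ID ω) atTop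
          (𝓝 (((Z ω)⁻¹ * IA ω) * ID ω)) :=
        (((htend ω h0).mul_const (IA ω)).mul_const (ID ω))
      rwa [show ((Z ω)⁻¹ * IA ω) * ID ω = ρ' ω * IA ω by
        rw [hρ'def]; dsimp; rw [div_eq_mul_inv]; ring] at h2
  -- RHS tendsto
  have hZ_int : Integrable Z P := integrable_condExp.congr hZver.symm
  have tendR : Tendsto (fun n => ∫ ω, (h n ω * IA ω) * Z ω ∂P) atTop
      (𝓝 (∫ ω, IA ω ∂P)) := by
    refine tendsto_integral_of_dominated_convergence (fun _ => (1 : ℝ))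
      (fun n => ((((hhmeas n).mono hmt).measurable.mul hIAmeas).mul
        ((hZmeas.mono hmt).measurable)).aestronglyMeasurable) (integrable_const 1) ?_ ?_
    · intro n
      filter_upwards [hZpos] with ω h0
      have hnn : 0 ≤ (h n ω * IA ω) * Z ω :=
        mul_nonneg (mul_nonneg (hn_nonneg n ω) (hIA01 ω).1) h0.le
      rw [Real.norm_eq_abs, abs_of_nonneg hnn]
      calc (h n ω * IA ω) * Z ω ≤ (h n ω * 1) * Z ω := by
            refine mul_le_mul_of_nonneg_right ?_ h0.le
            exact mul_le_mul_of_nonneg_left (hIA01 ω).2 (hn_nonneg n ω)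
        _ = Z ω * h n ω := by ring
        _ ≤ 1 := hZh_le_one n ω h0
    · filter_upwards [hZpos] with ω h0
      have h2 : Tendsto (fun n => (h n ω * IA ω) * Z ω) atTop
          (𝓝 (((Z ω)⁻¹ * IA ω) * Z ω)) :=
        (((htend ω h0).mul_const (IA ω)).mul_const (Z ω))
      rwa [show ((Z ω)⁻¹ * IA ω) * Z ω = IA ω by
        field_simp] at h2
  have heq : (fun n => ∫ ω, (h n ω * IA ω) * ID ω ∂P)
      = fun n => ∫ ω, (h n ω * IA ω) * Z ω ∂P :=
    funext fun n => claim1 n A' hA'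
  rw [heq] at tendL
  have hfinal : ∫ ω, ρ' ω * IA ω ∂P = ∫ ω, IA ω ∂P := tendsto_nhds_unique tendL tendR
  rw [hfinal, hIAdef]
  exact @integral_indicator_one Ω m P A' (hmt A' hA')

/-- Let `σ` be a random time whose Azéma supermartingale satisfies
`Z t > 0` `P`-a.s. for every `t`.  Then `ρ̃ t := 1_{σ>t} / Z t` is a `(P, 𝒢 t)`-martingale:
each `ρ̃ t` is `𝒢 t`-measurable and `P`-integrable, and `E^P[ρ̃ t | 𝒢 s] = ρ̃ s` `P`-a.s.
for all `s ≤ t`. -/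
theorem stmt_13 {Ω : Type*} {m : MeasurableSpace Ω}
    (P : Measure Ω) [IsProbabilityMeasure P]
    (ℱ : Filtration NNReal m)
    (σ : Ω → ENNReal) (hσ : Measurable σ)
    (G : NNReal → MeasurableSpace Ω)
    (hG : ∀ t : NNReal, G t = (ℱ t : MeasurableSpace Ω) ⊔
      MeasurableSpace.generateFrom
        {s : Set Ω | ∃ r : NNReal, r ≤ t ∧ s = {ω | (r : ENNReal) < σ ω}})
    (Z : NNReal → Ω → ℝ)
    (hZmeas : ∀ t : NNReal, StronglyMeasurable[ℱ t] (Z t))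
    (hZver : ∀ t : NNReal,
      Z t =ᵐ[P] P[Set.indicator {ω | (t : ENNReal) < σ ω} (fun _ => (1 : ℝ)) | ℱ t])
    (hZpos : ∀ t : NNReal, ∀ᵐ ω ∂P, 0 < Z t ω)
    (ρ : NNReal → Ω → ℝ)
    (hρ : ∀ t ω, ρ t ω =
      Set.indicator {ω' | (t : ENNReal) < σ ω'} (fun _ => (1 : ℝ)) ω / Z t ω) :
    (∀ t : NNReal, Measurable[G t] (ρ t)) ∧
    (∀ t : NNReal, Integrable (ρ t) P) ∧
    (∀ s t : NNReal, s ≤ t → P[ρ t | G s] =ᵐ[P] ρ s) := by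
  have hD : ∀ t : NNReal, MeasurableSet[m] {ω | (t : ENNReal) < σ ω} := fun t =>
    hσ measurableSet_Ioi
  have hρfun : ∀ t : NNReal, ρ t =
      fun ω => Set.indicator {ω' | (t : ENNReal) < σ ω'} (fun _ => (1 : ℝ)) ω / Z t ω :=
    fun t => funext (hρ t)
  have hkey := fun t : NNReal =>
    key P (ℱ t) (ℱ.le t) (Z t) (hZmeas t) _ (hD t) (hZver t) (hZpos t)
  have hGle : ∀ t : NNReal, (ℱ t : MeasurableSpace Ω) ≤ G t := fun t => by
    rw [hG t]; exact le_sup_left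
  have hDG : ∀ t : NNReal, MeasurableSet[G t] {ω | (t : ENNReal) < σ ω} := fun t => by
    rw [hG t]
    exact (le_sup_right (a := (ℱ t : MeasurableSpace Ω))) _
      (MeasurableSpace.measurableSet_generateFrom ⟨t, le_rfl, rfl⟩)
  have meas : ∀ t : NNReal, Measurable[G t] (ρ t) := by
    intro t
    rw [hρfun t]
    exact (measurable_const.indicator (hDG t)).div (((hZmeas t).mono (hGle t)).measurable)
  have int : ∀ t : NNReal, Integrable (ρ t) P := by
    intro t; rw [hρfun t]; exact (hkey t).1
  refine ⟨meas, int, ?_⟩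
  intro s t hst
  have hm : G s ≤ m := by
    rw [hG s]
    refine sup_le (ℱ.le s) (MeasurableSpace.generateFrom_le ?_)
    rintro _ ⟨r, hr, rfl⟩
    exact hD r
  haveI : SigmaFinite (P.trim hm) := (isFiniteMeasure_trim hm).toSigmaFinite
  set Ds : Set Ω := {ω | (s : ENNReal) < σ ω} with hDsdef
  have struct : ∀ A : Set Ω, MeasurableSet[G s] A →
      ∃ A', MeasurableSet[ℱ s] A' ∧ A ∩ Ds = A' ∩ Ds := by
    intro A hA
    let M : MeasurableSpace Ω :=
      { MeasurableSet' := fun B => ∃ B', MeasurableSet[ℱ s] B' ∧ B ∩ Ds = B' ∩ Ds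
        measurableSet_empty := ⟨∅, @MeasurableSet.empty Ω (ℱ s), by simp⟩
        measurableSet_compl := by
          rintro B ⟨B', hB', hBD⟩
          refine ⟨B'ᶜ, hB'.compl, ?_⟩
          ext ω
          have h2 := Set.ext_iff.mp hBD ω
          simp only [Set.mem_inter_iff, Set.mem_compl_iff] at h2 ⊢
          tauto
        measurableSet_iUnion := by
          intro f hf
          choose g hg hgD using hf
          exact ⟨⋃ i, g i, MeasurableSet.iUnion hg, by
            rw [Set.iUnion_inter, Set.iUnion_inter]; exact Set.iUnion_congr hgD⟩ }
    have hle : G s ≤ M := by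
      rw [hG s]
      refine sup_le ?_ (MeasurableSpace.generateFrom_le ?_)
      · intro B hB; exact ⟨B, hB, rfl⟩
      · rintro _ ⟨r, hr, rfl⟩
        refine ⟨Set.univ, MeasurableSet.univ, ?_⟩
        rw [Set.univ_inter]
        refine Set.inter_eq_right.mpr fun ω hω => ?_
        exact lt_of_le_of_lt (ENNReal.coe_le_coe.mpr hr) hω
    exact hle A hA
  have hDtsub : {ω | (t : ENNReal) < σ ω} ⊆ Ds := fun ω hω =>
    lt_of_le_of_lt (ENNReal.coe_le_coe.mpr hst) hω
  refine (ae_eq_condExp_of_forall_setIntegral_eq hm (int t)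
    (fun A hA _ => (int s).integrableOn) ?_
    ((meas s).stronglyMeasurable.aestronglyMeasurable)).symm
  intro A hA _
  obtain ⟨A', hA', hAD⟩ := struct A hA
  have hmA : MeasurableSet[m] A := hm A hA
  have e1 : ∫ x in A, ρ t x ∂P = (P A').toReal := by
    rw [← integral_indicator hmA]
    have hfe : A.indicator (ρ t) = fun ω =>
        (Set.indicator {ω' | (t : ENNReal) < σ ω'} (fun _ => (1 : ℝ)) ω / Z t ω) *
          A'.indicator (fun _ => (1 : ℝ)) ω := by
      funext ω
      by_cases hωD : ω ∈ {ω' | (t : ENNReal) < σ ω'}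
      · have hωDs : ω ∈ Ds := hDtsub hωD
        by_cases hωA : ω ∈ A
        · have hωA' : ω ∈ A' := ((Set.ext_iff.mp hAD ω).mp ⟨hωA, hωDs⟩).1
          simp [Set.indicator_of_mem, hωA, hωA', hρ t ω]
        · have hωA' : ω ∉ A' := fun h => hωA ((Set.ext_iff.mp hAD ω).mpr ⟨h, hωDs⟩).1
          simp [Set.indicator_of_notMem, hωA, hωA']
      · have hz : ρ t ω = 0 := by
          rw [hρ t ω, Set.indicator_of_notMem hωD, zero_div]
        by_cases hωA : ω ∈ A <;>
          simp [Set.indicator_apply, hωA, hωD, hz]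
    rw [hfe]
    exact (hkey t).2 A' ((ℱ.mono hst) A' hA')
  have e2 : ∫ x in A, ρ s x ∂P = (P A').toReal := by
    rw [← integral_indicator hmA]
    have hfe : A.indicator (ρ s) = fun ω =>
        (Set.indicator {ω' | (s : ENNReal) < σ ω'} (fun _ => (1 : ℝ)) ω / Z s ω) *
          A'.indicator (fun _ => (1 : ℝ)) ω := by
      funext ω
      by_cases hωD : ω ∈ Ds
      · by_cases hωA : ω ∈ A
        · have hωA' : ω ∈ A' := ((Set.ext_iff.mp hAD ω).mp ⟨hωA, hωD⟩).1
          simp [Set.indicator_of_mem, hωA, hωA', hρ s ω]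
        · have hωA' : ω ∉ A' := fun h => hωA ((Set.ext_iff.mp hAD ω).mpr ⟨h, hωD⟩).1
          simp [Set.indicator_of_notMem, hωA, hωA']
      · have hz : ρ s ω = 0 := by
          rw [hρ s ω, Set.indicator_of_notMem hωD, zero_div]
        by_cases hωA : ω ∈ A <;>
          simp [Set.indicator_apply, hωA, hωD, hz, (show σ ω ≤ (s : ENNReal) from not_lt.mp hωD)]
    rw [hfe]
    exact (hkey s).2 A' hA'
  rw [e1, e2]
end

section
/- Let σ be a random time and suppose that Z_t = N_t · D_t P-a.s. for every t ≥ 0, where (N_t) is an (F_t)-martingale and (D_t) is an (F_t)-adapted process with D_t > 0 P-a.s. for every t. Then the process ρ̃_t := 1_{σ>t} / D_t is a (P, G_t)-martingale: each ρ̃_t is G_t-measurable and P-integrable, and for all 0 ≤ s ≤ t, E^P[ρ̃_t | G_s] = ρ̃_s P-a.s. -/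
open MeasureTheory
open scoped ENNReal

theorem aux_lintegral_condexp' {Ω : Type*} {m : MeasurableSpace Ω}
    (P : Measure Ω) [IsFiniteMeasure P] {mt : MeasurableSpace Ω} (hle : mt ≤ m)
    {f : Ω → ℝ} (hfm : Measurable[m] f) (hf : Integrable f P) (hf_nn : 0 ≤ᵐ[P] f)
    {g : Ω → ℝ≥0∞} (hg : Measurable[mt] g) :
    ∫⁻ ω, ENNReal.ofReal (f ω) * g ω ∂P
      = ∫⁻ ω, ENNReal.ofReal ((P[f|mt]) ω) * g ω ∂P := by
  set μ₁ := P.withDensity fun ω => ENNReal.ofReal (f ω) with hμ₁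
  set μ₂ := P.withDensity fun ω => ENNReal.ofReal ((P[f|mt]) ω) with hμ₂
  have hZm : Measurable[mt] (P[f|mt]) := stronglyMeasurable_condExp.measurable
  have hgm : Measurable[m] g := hg.mono hle le_rfl
  have hfm' : Measurable[m] fun ω => ENNReal.ofReal (f ω) := hfm.ennreal_ofReal
  have hZm' : Measurable[m] fun ω => ENNReal.ofReal ((P[f|mt]) ω) :=
    (hZm.mono hle le_rfl).ennreal_ofReal
  have htrim : μ₁.trim hle = μ₂.trim hle := by
    refine @Measure.ext _ mt _ _ fun B hB => ?_
    have hBm : MeasurableSet[m] B := hle _ hB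
    rw [trim_measurableSet_eq hle hB, trim_measurableSet_eq hle hB, hμ₁, hμ₂,
      withDensity_apply _ hBm, withDensity_apply _ hBm,
      ← ofReal_integral_eq_lintegral_ofReal (hf.restrict (s := B))
        (ae_restrict_of_ae hf_nn),
      ← ofReal_integral_eq_lintegral_ofReal (integrable_condExp.restrict (s := B))
        (ae_restrict_of_ae (condExp_nonneg hf_nn)),
      setIntegral_condExp hle hf hB]
  have h1 : ∫⁻ ω, ENNReal.ofReal (f ω) * g ω ∂P = ∫⁻ ω, g ω ∂μ₁ :=
    (lintegral_withDensity_eq_lintegral_mul P hfm' hgm).symm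
  have h2 : ∫⁻ ω, ENNReal.ofReal ((P[f|mt]) ω) * g ω ∂P = ∫⁻ ω, g ω ∂μ₂ :=
    (lintegral_withDensity_eq_lintegral_mul P hZm' hgm).symm
  rw [h1, h2, ← lintegral_trim hle hg, ← lintegral_trim hle hg, htrim]


/-- Let `σ` be a random time whose Azéma supermartingale factorises as
`Z t = N t · D t` `P`-a.s. for every `t`, where `N` is an `(ℱ t)`-martingale and `D` is
`(ℱ t)`-adapted with `D t > 0` `P`-a.s.  Then `ρ̃ t := 1_{σ>t} / D t` is a
`(P, 𝒢 t)`-martingale: each `ρ̃ t` is `𝒢 t`-measurable and `P`-integrable, and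
`E^P[ρ̃ t | 𝒢 s] = ρ̃ s` `P`-a.s. for all `s ≤ t`. -/
theorem stmt_14 {Ω : Type*} {m : MeasurableSpace Ω}
    (P : Measure Ω) [IsProbabilityMeasure P]
    (ℱ : Filtration NNReal m)
    (σ : Ω → ENNReal) (hσ : Measurable σ)
    (G : NNReal → MeasurableSpace Ω)
    (hG : ∀ t : NNReal, G t = (ℱ t : MeasurableSpace Ω) ⊔
      MeasurableSpace.generateFrom
        {s : Set Ω | ∃ r : NNReal, r ≤ t ∧ s = {ω | (r : ENNReal) < σ ω}})
    (N D : NNReal → Ω → ℝ)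
    (hN : Martingale N ℱ P)
    (hDadapted : ∀ t : NNReal, StronglyMeasurable[ℱ t] (D t))
    (hDpos : ∀ t : NNReal, ∀ᵐ ω ∂P, 0 < D t ω)
    (hZ : ∀ t : NNReal,
      P[Set.indicator {ω | (t : ENNReal) < σ ω} (fun _ => (1 : ℝ)) | ℱ t]
        =ᵐ[P] fun ω => N t ω * D t ω)
    (ρ : NNReal → Ω → ℝ)
    (hρ : ∀ t ω, ρ t ω =
      Set.indicator {ω' | (t : ENNReal) < σ ω'} (fun _ => (1 : ℝ)) ω / D t ω) :
    (∀ t : NNReal, Measurable[G t] (ρ t)) ∧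
    (∀ t : NNReal, Integrable (ρ t) P) ∧
    (∀ s t : NNReal, s ≤ t → P[ρ t | G s] =ᵐ[P] ρ s) := by
  -- notation
  set A : NNReal → Set Ω := fun t => {ω | (t : ENNReal) < σ ω} with hA_def
  set I : NNReal → Ω → ℝ := fun t => Set.indicator (A t) (fun _ => (1 : ℝ)) with hI_def
  have hAmes : ∀ t, MeasurableSet (A t) := fun t => hσ measurableSet_Ioi
  have hAG : ∀ r t : NNReal, r ≤ t → MeasurableSet[G t] (A r) := by
    intro r t hrt
    rw [hG t]
    have h2 : MeasurableSpace.generateFrom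
        {s : Set Ω | ∃ r' : NNReal, r' ≤ t ∧ s = {ω | (r' : ENNReal) < σ ω}}
        ≤ (ℱ t : MeasurableSpace Ω) ⊔ MeasurableSpace.generateFrom
        {s : Set Ω | ∃ r' : NNReal, r' ≤ t ∧ s = {ω | (r' : ENNReal) < σ ω}} := le_sup_right
    exact h2 _ (MeasurableSpace.measurableSet_generateFrom ⟨r, hrt, rfl⟩)
  have hFG : ∀ t : NNReal, (ℱ t : MeasurableSpace Ω) ≤ G t := by
    intro t; rw [hG t]; exact le_sup_left
  have hGle : ∀ t : NNReal, G t ≤ m := by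
    intro t
    rw [hG t]
    refine sup_le (ℱ.le t) (MeasurableSpace.generateFrom_le ?_)
    rintro s ⟨r, _, rfl⟩
    exact hσ measurableSet_Ioi
  -- measurability
  have hmeas : ∀ t : NNReal, Measurable[G t] (ρ t) := by
    intro t
    have hfun : ρ t = fun ω => I t ω / D t ω := funext (hρ t)
    rw [hfun]
    exact ((measurable_const.indicator (hAG t t le_rfl))).div
      ((hDadapted t).measurable.mono (hFG t) le_rfl)
  have hmeasm : ∀ t : NNReal, Measurable (ρ t) := fun t =>
    (hmeas t).mono (hGle t) le_rfl
  -- basic a.e. facts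
  have hInn : ∀ t, 0 ≤ᵐ[P] I t := fun t =>
    Filter.Eventually.of_forall fun ω => Set.indicator_nonneg (fun _ _ => zero_le_one) ω
  have hIint : ∀ t, Integrable (I t) P :=
    fun t => (integrable_const (1 : ℝ)).indicator (hAmes t)
  have hIm : ∀ t, Measurable (I t) := fun t => measurable_const.indicator (hAmes t)
  have hρnn : ∀ t, 0 ≤ᵐ[P] ρ t := by
    intro t
    filter_upwards [hDpos t] with ω hD
    rw [hρ t ω]
    exact div_nonneg (Set.indicator_nonneg (fun _ _ => zero_le_one) ω) hD.le
  have hZnn : ∀ t : NNReal, 0 ≤ᵐ[P] (P[I t|(ℱ t : MeasurableSpace Ω)]) :=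
    fun t => condExp_nonneg (hInn t)
  have hNnn : ∀ t, 0 ≤ᵐ[P] N t := by
    intro t
    filter_upwards [hDpos t, hZ t, hZnn t] with ω hD hZeq hZn
    have hZeq' : (P[I t|(ℱ t : MeasurableSpace Ω)]) ω = N t ω * D t ω := hZeq
    have : 0 ≤ N t ω * D t ω := by rw [← hZeq']; exact hZn
    exact (mul_nonneg_iff_of_pos_right hD).mp this
  -- key lintegral identity
  have L2 : ∀ (t : NNReal) (B : Set Ω), MeasurableSet[ℱ t] B →
      ∫⁻ ω in B, ENNReal.ofReal (ρ t ω) ∂P = ∫⁻ ω in B, ENNReal.ofReal (N t ω) ∂P := by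
    intro t B hB
    have hBm : MeasurableSet B := ℱ.le t _ hB
    set g : Ω → ℝ≥0∞ := B.indicator fun ω => ENNReal.ofReal (D t ω)⁻¹ with hg_def
    have hgm : Measurable[ℱ t] g :=
      (((hDadapted t).measurable.inv).ennreal_ofReal).indicator hB
    have e1 : ∫⁻ ω in B, ENNReal.ofReal (ρ t ω) ∂P
        = ∫⁻ ω, ENNReal.ofReal (I t ω) * g ω ∂P := by
      rw [← lintegral_indicator hBm _]
      refine lintegral_congr_ae ?_
      filter_upwards [hDpos t] with ω hD
      by_cases hωB : ω ∈ B
      · rw [Set.indicator_of_mem hωB, hg_def, Set.indicator_of_mem hωB, hρ t ω,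
          div_eq_mul_inv, ENNReal.ofReal_mul (Set.indicator_nonneg (fun _ _ => zero_le_one) ω)]
      · rw [Set.indicator_of_notMem hωB, hg_def, Set.indicator_of_notMem hωB, mul_zero]
    have e2 : ∫⁻ ω, ENNReal.ofReal (I t ω) * g ω ∂P
        = ∫⁻ ω, ENNReal.ofReal ((P[I t|ℱ t]) ω) * g ω ∂P :=
      aux_lintegral_condexp' P (ℱ.le t) (hIm t) (hIint t) (hInn t) hgm
    have e3 : ∫⁻ ω, ENNReal.ofReal ((P[I t|ℱ t]) ω) * g ω ∂P
        = ∫⁻ ω in B, ENNReal.ofReal (N t ω) ∂P := by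
      rw [← lintegral_indicator hBm _]
      refine lintegral_congr_ae ?_
      filter_upwards [hDpos t, hZ t, hNnn t] with ω hD hZeq hNn
      have hZeq' : (P[I t|(ℱ t : MeasurableSpace Ω)]) ω = N t ω * D t ω := hZeq
      by_cases hωB : ω ∈ B
      · rw [hg_def, Set.indicator_of_mem hωB, Set.indicator_of_mem hωB, hZeq',
          ← ENNReal.ofReal_mul (mul_nonneg hNn hD.le), mul_assoc,
          mul_inv_cancel₀ hD.ne', mul_one]
      · rw [hg_def, Set.indicator_of_notMem hωB, Set.indicator_of_notMem hωB, mul_zero]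
    rw [e1, e2, e3]
  -- integrability
  have hint : ∀ t : NNReal, Integrable (ρ t) P := by
    intro t
    refine ⟨(hmeasm t).aestronglyMeasurable, ?_⟩
    rw [hasFiniteIntegral_iff_norm]
    have : ∫⁻ ω, ENNReal.ofReal ‖ρ t ω‖ ∂P = ∫⁻ ω, ENNReal.ofReal (ρ t ω) ∂P := by
      refine lintegral_congr_ae ?_
      filter_upwards [hρnn t] with ω h
      rw [Real.norm_eq_abs, abs_of_nonneg h]
    rw [this]
    have h2 : ∫⁻ ω, ENNReal.ofReal (ρ t ω) ∂P = ∫⁻ ω, ENNReal.ofReal (N t ω) ∂P := by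
      have := L2 t Set.univ MeasurableSet.univ
      simpa [Measure.restrict_univ] using this
    rw [h2]
    calc ∫⁻ ω, ENNReal.ofReal (N t ω) ∂P ≤ ∫⁻ ω, ENNReal.ofReal ‖N t ω‖ ∂P :=
          lintegral_mono fun ω => ENNReal.ofReal_le_ofReal (le_abs_self _)
      _ < ⊤ := by
          rw [← hasFiniteIntegral_iff_norm]
          exact (hN.integrable t).2
  -- set integral identity
  have hset : ∀ (t : NNReal) (B : Set Ω), MeasurableSet[ℱ t] B →
      ∫ ω in B, ρ t ω ∂P = ∫ ω in B, N t ω ∂P := by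
    intro t B hB
    rw [integral_eq_lintegral_of_nonneg_ae (ae_restrict_of_ae (hρnn t))
        ((hmeasm t).aestronglyMeasurable.restrict),
      integral_eq_lintegral_of_nonneg_ae (ae_restrict_of_ae (hNnn t))
        (hN.integrable t).aestronglyMeasurable.restrict,
      L2 t B hB]
  have hset2 : ∀ s t : NNReal, s ≤ t → ∀ B : Set Ω, MeasurableSet[ℱ s] B →
      ∫ ω in B, ρ t ω ∂P = ∫ ω in B, ρ s ω ∂P := by
    intro s t hst B hB
    rw [hset t B (ℱ.mono hst _ hB), hset s B hB, ← hN.setIntegral_eq hst hB]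
  -- the π-system
  refine ⟨hmeas, hint, ?_⟩
  intro s t hst
  set S0 : Set (Set Ω) := {C | ∃ B, MeasurableSet[ℱ s] B ∧
    (C = B ∨ ∃ r : NNReal, r ≤ s ∧ C = B ∩ A r)} with hS0_def
  have hgen : G s = MeasurableSpace.generateFrom S0 := by
    refine le_antisymm ?_ ?_
    · rw [hG s]
      refine sup_le ?_ (MeasurableSpace.generateFrom_le ?_)
      · intro B hB
        exact MeasurableSpace.measurableSet_generateFrom ⟨B, hB, Or.inl rfl⟩
      · rintro C ⟨r, hr, rfl⟩
        exact MeasurableSpace.measurableSet_generateFrom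
          ⟨Set.univ, MeasurableSet.univ, Or.inr ⟨r, hr, (Set.univ_inter _).symm⟩⟩
    · refine MeasurableSpace.generateFrom_le ?_
      rintro C ⟨B, hB, hC | ⟨r, hr, hC⟩⟩
      · exact hC ▸ hFG s _ hB
      · exact hC ▸ (hFG s _ hB).inter (hAG r s hr)
  have hpi : IsPiSystem S0 := by
    rintro C₁ ⟨B₁, hB₁, hC₁⟩ C₂ ⟨B₂, hB₂, hC₂⟩ -
    have hAinter : ∀ r₁ r₂ : NNReal, A r₁ ∩ A r₂ = A (max r₁ r₂) := by
      intro r₁ r₂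
      ext ω
      simp only [hA_def, Set.mem_inter_iff, Set.mem_setOf_eq, ENNReal.coe_max, max_lt_iff]
    rcases hC₁ with hC₁ | ⟨r₁, hr₁, hC₁⟩ <;> rcases hC₂ with hC₂ | ⟨r₂, hr₂, hC₂⟩
    · exact ⟨B₁ ∩ B₂, hB₁.inter hB₂, Or.inl (by rw [hC₁, hC₂])⟩
    · refine ⟨B₁ ∩ B₂, hB₁.inter hB₂, Or.inr ⟨r₂, hr₂, ?_⟩⟩
      rw [hC₁, hC₂]; ext ω; simp only [Set.mem_inter_iff]; tauto
    · refine ⟨B₁ ∩ B₂, hB₁.inter hB₂, Or.inr ⟨r₁, hr₁, ?_⟩⟩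
      rw [hC₁, hC₂]; ext ω; simp only [Set.mem_inter_iff]; tauto
    · refine ⟨B₁ ∩ B₂, hB₁.inter hB₂, Or.inr ⟨max r₁ r₂, max_le hr₁ hr₂, ?_⟩⟩
      rw [hC₁, hC₂, ← hAinter r₁ r₂]; ext ω; simp only [Set.mem_inter_iff]; tauto
  -- reduction lemma: integrating over C ∩ A r
  have hred : ∀ (u r : NNReal), r ≤ u → ∀ B : Set Ω, MeasurableSet B →
      ∫ ω in B ∩ A r, ρ u ω ∂P = ∫ ω in B, ρ u ω ∂P := by
    intro u r hru B hB
    have h1 : ∫ ω in B, (A r).indicator (ρ u) ω ∂P = ∫ ω in B ∩ A r, ρ u ω ∂P :=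
      setIntegral_indicator (hAmes r)
    have h2 : (A r).indicator (ρ u) = ρ u := by
      funext ω
      by_cases hω : ω ∈ A r
      · rw [Set.indicator_of_mem hω]
      · rw [Set.indicator_of_notMem hω, hρ u ω, Set.indicator_of_notMem, zero_div]
        intro hc
        exact hω (lt_of_le_of_lt (ENNReal.coe_le_coe.mpr hru) hc)
    rw [← h1, h2]
  -- main: ∀ C ∈ G s, ∫_C ρ t = ∫_C ρ s
  have hmain : ∀ C : Set Ω, MeasurableSet[G s] C →
      ∫ ω in C, ρ t ω ∂P = ∫ ω in C, ρ s ω ∂P := by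
    have huniv : ∫ ω, ρ t ω ∂P = ∫ ω, ρ s ω ∂P := by
      have := hset2 s t hst Set.univ MeasurableSet.univ
      simpa [Measure.restrict_univ] using this
    have := MeasurableSpace.induction_on_inter (m := G s)
      (C := fun C _ => ∫ ω in C, ρ t ω ∂P = ∫ ω in C, ρ s ω ∂P) hgen hpi
    refine fun C hC => this ?_ ?_ ?_ ?_ C hC
    · simp
    · rintro C ⟨B, hB, hCB | ⟨r, hr, hCB⟩⟩
      · rw [hCB]; exact hset2 s t hst B hB
      · rw [hCB, hred t r (hr.trans hst) B (ℱ.le s _ hB),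
          hred s r hr B (ℱ.le s _ hB)]
        exact hset2 s t hst B hB
    · intro C hC hC'
      have hCm : MeasurableSet C := hGle s _ hC
      have e1 := integral_add_compl hCm (hint t)
      have e2 := integral_add_compl hCm (hint s)
      rw [← huniv] at e2
      linarith [e1, e2, hC']
    · intro f hdisj hfm hfeq
      have hfm' : ∀ i, MeasurableSet (f i) := fun i => hGle s _ (hfm i)
      rw [integral_iUnion hfm' hdisj (hint t).integrableOn,
        integral_iUnion hfm' hdisj (hint s).integrableOn]
      exact tsum_congr hfeq
  -- conclude
  haveI : SigmaFinite (P.trim (hGle s)) := inferInstance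
  refine (ae_eq_condExp_of_forall_setIntegral_eq (hGle s) (hint t)
    (fun C hC _ => (hint s).integrableOn) (fun C hC _ => (hmain C hC).symm) ?_).symm
  exact StronglyMeasurable.aestronglyMeasurable (Measurable.stronglyMeasurable (hmeas s))
end

section
/- Let σ be an honest random time with P(σ < ∞) = 1 and P(σ = t) = 0 for every t ≥ 0, i.e. for every t > 0 there is an F_t-measurable random variable σ_t : Ω → [0,∞) with σ = σ_t on {σ < t}. Let ρ ≥ 0 with E^P[ρ] = 1, set Q := ρ·P, and let k_t be an F_t-measurable version of E^P[ρ·1_{σ≤t} | F_t]. Fix u ≥ 0 and let (Y_t) be an (F_t)-adapted process such that for every t ≥ u the random variable 1_{σ_t ≤ u}·k_t·Y_t is P-integrable and, for all u ≤ s ≤ t, E^P[1_{σ_t ≤ u}·k_t·Y_t | F_s] = 1_{σ_s ≤ u}·k_s·Y_s P-a.s. Then for every t ≥ u the random variable Y_t·1_{σ≤u} is Q-integrable and, for all u ≤ s ≤ t, E^Q[Y_t·1_{σ≤u} | G_s] = Y_s·1_{σ≤u} Q-a.s. -/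
open MeasureTheory

lemma aux_pull {Ω : Type*} {m : MeasurableSpace Ω} {P : Measure Ω} [IsProbabilityMeasure P]
    {mF : MeasurableSpace Ω} (hm : mF ≤ m)
    {X : Ω → ℝ} (hX : Integrable X P) (hX0 : 0 ≤ᵐ[P] X)
    {k : Ω → ℝ} (hkv : k =ᵐ[P] P[X | mF])
    {f : Ω → ℝ} (hf : StronglyMeasurable[mF] f)
    (hfk : Integrable (fun ω => f ω * k ω) P) :
    Integrable (fun ω => f ω * X ω) P ∧
      ∫ ω, f ω * X ω ∂P = ∫ ω, f ω * k ω ∂P := by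
  haveI : SigmaFinite (P.trim hm) := inferInstance
  have hk_int : Integrable k P := integrable_condExp.congr hkv.symm
  have hk0 : 0 ≤ᵐ[P] k := by
    filter_upwards [hkv, condExp_nonneg (m := mF) hX0] with ω h1 h2
    rw [h1]; exact h2
  have hmeasf : Measurable[m] f := hf.measurable.mono hm le_rfl
  have hnfk : Integrable (fun ω => ‖f ω‖ * k ω) P := by
    refine hfk.norm.congr ?_
    filter_upwards [hk0] with ω hω
    rw [norm_mul, Real.norm_of_nonneg hω]
  set g : ℕ → Ω → ℝ := fun n ω => min ‖f ω‖ n with hg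
  have hg_meas : ∀ n, StronglyMeasurable[mF] (g n) := fun n => hf.norm.inf stronglyMeasurable_const
  have hg_nonneg : ∀ n ω, 0 ≤ g n ω := fun n ω => le_min (norm_nonneg _) (Nat.cast_nonneg n)
  have hg_bdd : ∀ n, ∃ C, ∀ ω, ‖g n ω‖ ≤ C := fun n =>
    ⟨n, fun ω => by rw [Real.norm_of_nonneg (hg_nonneg n ω)]; exact min_le_right _ _⟩
  have hgX_int : ∀ n, Integrable (fun ω => g n ω * X ω) P := fun n =>
    hX.bdd_mul ((hg_meas n).mono hm).aestronglyMeasurable (ae_of_all _ (hg_bdd n).choose_spec)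
  have hgk_int : ∀ n, Integrable (fun ω => g n ω * k ω) P := fun n =>
    hk_int.bdd_mul ((hg_meas n).mono hm).aestronglyMeasurable (ae_of_all _ (hg_bdd n).choose_spec)
  have h_step : ∀ n, ∫ ω, g n ω * X ω ∂P = ∫ ω, g n ω * k ω ∂P := by
    intro n
    have h1 : P[fun ω => g n ω * X ω | mF] =ᵐ[P] fun ω => g n ω * (P[X | mF]) ω :=
      condExp_mul_of_stronglyMeasurable_left (hg_meas n) (hgX_int n) hX
    calc ∫ ω, g n ω * X ω ∂P = ∫ ω, (P[fun ω => g n ω * X ω | mF]) ω ∂P :=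
          (integral_condExp hm).symm
      _ = ∫ ω, g n ω * (P[X | mF]) ω ∂P := integral_congr_ae h1
      _ = ∫ ω, g n ω * k ω ∂P := integral_congr_ae (by
          filter_upwards [hkv] with ω hω; rw [hω])
  have h_bd : ∀ n, ∫ ω, g n ω * X ω ∂P ≤ ∫ ω, ‖f ω‖ * k ω ∂P := by
    intro n
    rw [h_step n]
    refine integral_mono_ae (hgk_int n) hnfk ?_
    filter_upwards [hk0] with ω hω
    exact mul_le_mul_of_nonneg_right (min_le_left _ _) hω
  have h_lint : ∫⁻ ω, ENNReal.ofReal ‖f ω‖ * ENNReal.ofReal (X ω) ∂P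
      ≤ ENNReal.ofReal (∫ ω, ‖f ω‖ * k ω ∂P) := by
    have hmeasX : AEMeasurable X P := hX.aemeasurable
    have h_mct : ∫⁻ ω, ENNReal.ofReal ‖f ω‖ * ENNReal.ofReal (X ω) ∂P
        = ⨆ n, ∫⁻ ω, ENNReal.ofReal (g n ω) * ENNReal.ofReal (X ω) ∂P := by
      rw [← lintegral_iSup']
      · refine lintegral_congr fun ω => ?_
        rw [← ENNReal.iSup_mul]
        congr 1
        refine le_antisymm ?_ (iSup_le fun n => ENNReal.ofReal_le_ofReal (min_le_left _ _))
        refine le_iSup_of_le ⌈‖f ω‖⌉₊ (ENNReal.ofReal_le_ofReal ?_)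
        exact le_min le_rfl (Nat.le_ceil _)
      · exact fun n => ((ENNReal.measurable_ofReal.comp
          ((hg_meas n).measurable.mono hm le_rfl)).aemeasurable).mul hmeasX.ennreal_ofReal
      · refine ae_of_all _ fun ω a b hab => ?_
        exact mul_le_mul_left (ENNReal.ofReal_le_ofReal
          (min_le_min le_rfl (Nat.cast_le.mpr hab))) _
    rw [h_mct]
    refine iSup_le fun n => ?_
    have heq : ∫⁻ ω, ENNReal.ofReal (g n ω) * ENNReal.ofReal (X ω) ∂P
        = ENNReal.ofReal (∫ ω, g n ω * X ω ∂P) := by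
      rw [ofReal_integral_eq_lintegral_ofReal (hgX_int n)
        (by filter_upwards [hX0] with ω hω; exact mul_nonneg (hg_nonneg n ω) hω)]
      refine lintegral_congr fun ω => ?_
      rw [ENNReal.ofReal_mul (hg_nonneg n ω)]
    rw [heq]
    exact ENNReal.ofReal_le_ofReal (h_bd n)
  have hfX : Integrable (fun ω => f ω * X ω) P := by
    refine ⟨((hf.mono hm).aestronglyMeasurable.mul hX.1), ?_⟩
    have heq : ∫⁻ ω, (‖f ω * X ω‖₊ : ENNReal) ∂P
        = ∫⁻ ω, ENNReal.ofReal ‖f ω‖ * ENNReal.ofReal (X ω) ∂P := by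
      refine lintegral_congr_ae ?_
      filter_upwards [hX0] with ω hω
      rw [← enorm_eq_nnnorm, ← ofReal_norm, norm_mul, ENNReal.ofReal_mul (norm_nonneg _),
        Real.norm_of_nonneg hω]
    show (∫⁻ ω, (‖f ω * X ω‖₊ : ENNReal) ∂P) < ⊤
    rw [heq]
    exact lt_of_le_of_lt h_lint ENNReal.ofReal_lt_top
  refine ⟨hfX, ?_⟩
  have h1 : P[fun ω => f ω * X ω | mF] =ᵐ[P] fun ω => f ω * (P[X | mF]) ω :=
    condExp_mul_of_stronglyMeasurable_left hf hfX hX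
  calc ∫ ω, f ω * X ω ∂P = ∫ ω, (P[fun ω => f ω * X ω | mF]) ω ∂P :=
        (integral_condExp hm).symm
    _ = ∫ ω, f ω * (P[X | mF]) ω ∂P := integral_congr_ae h1
    _ = ∫ ω, f ω * k ω ∂P := integral_congr_ae (by
        filter_upwards [hkv] with ω hω; rw [hω])

/-- Let `σ` be an honest random time (finite a.s., avoiding
deterministic times, with `ℱ t`-measurable `σ_t` satisfying `σ = σ_t` on `{σ < t}`),
let `ρ ≥ 0` with `E^P[ρ] = 1`, `Q := ρ·P`, and let `k t` be an `ℱ t`-measurable version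
of `E^P[ρ·1_{σ≤t} | ℱ t]`.  Fix `u ≥ 0` and let `Y` be `(ℱ t)`-adapted such that
`(1_{σ_t ≤ u}·k t·Y t)_{t ≥ u}` is a `(P, ℱ t)`-martingale on `[u,∞)`.  Then
`(Y t·1_{σ ≤ u})_{t ≥ u}` is a `(Q, 𝒢 t)`-martingale on `[u,∞)`. -/
theorem stmt_15 {Ω : Type*} {m : MeasurableSpace Ω}
    (P : Measure Ω) [IsProbabilityMeasure P]
    (ℱ : Filtration NNReal m)
    (σ : Ω → ENNReal) (hσ : Measurable σ)
    (hσfin : ∀ᵐ ω ∂P, σ ω ≠ ⊤)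
    (hσavoid : ∀ t : NNReal, P {ω | σ ω = (t : ENNReal)} = 0)
    (st : NNReal → Ω → NNReal)
    (hst : ∀ t : NNReal, 0 < t → Measurable[ℱ t] (st t) ∧
      ∀ ω, σ ω < (t : ENNReal) → σ ω = (st t ω : ENNReal))
    (ρ : Ω → ℝ) (hρ0 : 0 ≤ ρ) (hρint : Integrable ρ P) (hρ1 : ∫ ω, ρ ω ∂P = 1)
    (Q : Measure Ω) (hQ : Q = P.withDensity fun ω => ENNReal.ofReal (ρ ω))
    (G : NNReal → MeasurableSpace Ω)
    (hG : ∀ t : NNReal, G t = (ℱ t : MeasurableSpace Ω) ⊔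
      MeasurableSpace.generateFrom
        {s : Set Ω | ∃ r : NNReal, r ≤ t ∧ s = {ω | (r : ENNReal) < σ ω}})
    (k : NNReal → Ω → ℝ)
    (hkmeas : ∀ t : NNReal, StronglyMeasurable[ℱ t] (k t))
    (hkver : ∀ t : NNReal,
      k t =ᵐ[P] P[fun ω => ρ ω * Set.indicator {ω' | σ ω' ≤ (t : ENNReal)} (fun _ => (1 : ℝ)) ω | ℱ t])
    (u : NNReal)
    (Y : NNReal → Ω → ℝ)
    (hYadapted : ∀ t : NNReal, StronglyMeasurable[ℱ t] (Y t))
    (hint : ∀ t : NNReal, u ≤ t →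
      Integrable (fun ω => Set.indicator {ω' | st t ω' ≤ u} (fun ω' => k t ω' * Y t ω') ω) P)
    (hmart : ∀ s t : NNReal, u ≤ s → s ≤ t →
      P[fun ω => Set.indicator {ω' | st t ω' ≤ u} (fun ω' => k t ω' * Y t ω') ω | ℱ s]
        =ᵐ[P] fun ω => Set.indicator {ω' | st s ω' ≤ u} (fun ω' => k s ω' * Y s ω') ω) :
    (∀ t : NNReal, u ≤ t →
      Integrable (fun ω => Y t ω * Set.indicator {ω' | σ ω' ≤ (u : ENNReal)} (fun _ => (1 : ℝ)) ω) Q) ∧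
    (∀ s t : NNReal, u ≤ s → s ≤ t →
      Q[fun ω => Y t ω * Set.indicator {ω' | σ ω' ≤ (u : ENNReal)} (fun _ => (1 : ℝ)) ω | G s]
        =ᵐ[Q] fun ω => Y s ω * Set.indicator {ω' | σ ω' ≤ (u : ENNReal)} (fun _ => (1 : ℝ)) ω) := by
  classical
  have hQP : Q ≪ P := by rw [hQ]; exact withDensity_absolutelyContinuous _ _
  have hρae : AEMeasurable ρ P := hρint.aemeasurable
  have hρnn : AEMeasurable (fun ω => (ρ ω).toNNReal) P := hρae.real_toNNReal
  have hQd : Q = P.withDensity fun ω => (((ρ ω).toNNReal : NNReal) : ENNReal) := hQ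
  haveI hQprob : IsProbabilityMeasure Q := by
    constructor
    rw [hQ, withDensity_apply _ MeasurableSet.univ, Measure.restrict_univ,
      ← ofReal_integral_eq_lintegral_ofReal hρint (ae_of_all _ hρ0), hρ1, ENNReal.ofReal_one]
  set Su : Set Ω := {ω' | σ ω' ≤ (u : ENNReal)} with hSu_def
  have hSu_meas : MeasurableSet Su := hσ measurableSet_Iic
  by_cases hu : u = 0
  · -- degenerate case: {σ ≤ 0} is null
    have hSu0 : P Su = 0 := by
      have h1 : Su = {ω | σ ω = ((0 : NNReal) : ENNReal)} := by
        ext ω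
        simp [hSu_def, hu, le_zero_iff]
      rw [h1]; exact hσavoid 0
    have hQSu : Q Su = 0 := hQP hSu0
    have hae : ∀ t : NNReal,
        (fun ω => Y t ω * Set.indicator Su (fun _ => (1 : ℝ)) ω) =ᵐ[Q] 0 := by
      intro t
      filter_upwards [measure_eq_zero_iff_ae_notMem.mp hQSu] with ω hω
      simp [Set.indicator_of_notMem hω]
    constructor
    · exact fun t _ => (integrable_zero _ _ _).congr (hae t).symm
    · intro s t hs hst'
      calc Q[fun ω => Y t ω * Set.indicator Su (fun _ => (1 : ℝ)) ω | G s]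
          =ᵐ[Q] Q[(0 : Ω → ℝ) | G s] := condExp_congr_ae (hae t)
        _ =ᵐ[Q] (0 : Ω → ℝ) := by rw [condExp_zero]
        _ =ᵐ[Q] fun ω => Y s ω * Set.indicator Su (fun _ => (1 : ℝ)) ω := (hae s).symm
  · -- main case
    have hupos : 0 < u := pos_iff_ne_zero.mpr hu
    have hXint : ∀ v : NNReal, Integrable
        (fun ω => ρ ω * Set.indicator {ω' | σ ω' ≤ (v : ENNReal)} (fun _ => (1 : ℝ)) ω) P := by
      intro v
      have hmeas : MeasurableSet {ω' | σ ω' ≤ (v : ENNReal)} := hσ measurableSet_Iic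
      have h1 : (fun ω => ρ ω * Set.indicator {ω' | σ ω' ≤ (v : ENNReal)} (fun _ => (1 : ℝ)) ω)
          = Set.indicator {ω' | σ ω' ≤ (v : ENNReal)} ρ := by
        funext ω
        by_cases h : ω ∈ {ω' | σ ω' ≤ (v : ENNReal)}
        · rw [Set.indicator_of_mem h, Set.indicator_of_mem h, mul_one]
        · rw [Set.indicator_of_notMem h, Set.indicator_of_notMem h, mul_zero]
      rw [h1]
      exact hρint.indicator hmeas
    have hX0 : ∀ v : NNReal, 0 ≤ᵐ[P]
        fun ω => ρ ω * Set.indicator {ω' | σ ω' ≤ (v : ENNReal)} (fun _ => (1 : ℝ)) ω :=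
      fun v => ae_of_all _ fun ω =>
        mul_nonneg (hρ0 ω) (Set.indicator_nonneg (fun _ _ => zero_le_one) ω)
    have hne : ∀ v : NNReal, ∀ᵐ ω ∂P, σ ω ≠ (v : ENNReal) := by
      intro v
      rw [ae_iff]
      simp only [ne_eq, not_not]
      exact hσavoid v
    have hAE : ∀ v : NNReal, u ≤ v → (∀ᵐ ω ∂P,
        Set.indicator Su (fun _ => (1 : ℝ)) ω
          = Set.indicator {ω' | st v ω' ≤ u} (fun _ => (1 : ℝ)) ω
            * Set.indicator {ω' | σ ω' ≤ (v : ENNReal)} (fun _ => (1 : ℝ)) ω) := by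
      intro v hv
      have hvpos : 0 < v := lt_of_lt_of_le hupos hv
      filter_upwards [hne v] with ω hω
      by_cases h1 : ω ∈ Su
      · have h2 : σ ω < (v : ENNReal) :=
          lt_of_le_of_ne (le_trans (h1 : σ ω ≤ (u : ENNReal)) (ENNReal.coe_le_coe.mpr hv)) hω
        have h3 := (hst v hvpos).2 ω h2
        have h4 : st v ω ≤ u := by
          rw [← ENNReal.coe_le_coe, ← h3]; exact h1
        have h4' : ω ∈ {ω' | st v ω' ≤ u} := h4
        have h2'' : ω ∈ {ω' | σ ω' ≤ (v : ENNReal)} := le_of_lt h2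
        rw [Set.indicator_of_mem h1, Set.indicator_of_mem h4',
          Set.indicator_of_mem h2'', mul_one]
      · rw [Set.indicator_of_notMem h1]
        by_cases h2 : σ ω ≤ (v : ENNReal)
        · have h2' : σ ω < (v : ENNReal) := lt_of_le_of_ne h2 hω
          have h3 := (hst v hvpos).2 ω h2'
          have h4 : ¬ st v ω ≤ u := by
            intro h5
            exact h1 (by show σ ω ≤ (u : ENNReal); rw [h3]; exact_mod_cast h5)
          have h4' : ω ∉ {ω' | st v ω' ≤ u} := h4
          rw [Set.indicator_of_notMem h4', zero_mul]
        · have h2'' : ω ∉ {ω' | σ ω' ≤ (v : ENNReal)} := h2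
          rw [Set.indicator_of_notMem h2'', mul_zero]
    -- the key computation
    have key : ∀ v : NNReal, u ≤ v → ∀ B : Set Ω, MeasurableSet[ℱ v] B →
        Integrable (fun ω => Set.indicator B (fun _ => (1 : ℝ)) ω
          * (Y v ω * Set.indicator Su (fun _ => (1 : ℝ)) ω)) Q ∧
        ∫ ω, Set.indicator B (fun _ => (1 : ℝ)) ω
            * (Y v ω * Set.indicator Su (fun _ => (1 : ℝ)) ω) ∂Q
          = ∫ ω in B, Set.indicator {ω' | st v ω' ≤ u} (fun ω' => k v ω' * Y v ω') ω ∂P := by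
      intro v hv B hB
      have hvpos : 0 < v := lt_of_lt_of_le hupos hv
      have hSv : MeasurableSet[ℱ v] {ω' | st v ω' ≤ u} := (hst v hvpos).1 measurableSet_Iic
      set f : Ω → ℝ := Set.indicator (B ∩ {ω' | st v ω' ≤ u}) (Y v) with hfdef
      have hf_meas : StronglyMeasurable[ℱ v] f := (hYadapted v).indicator (hB.inter hSv)
      have hpt : ∀ ω, Set.indicator B
          (fun ω' => Set.indicator {ω' | st v ω' ≤ u} (fun ω'' => k v ω'' * Y v ω'') ω') ω
          = f ω * k v ω := by
        intro ω
        by_cases h2 : ω ∈ B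
        · by_cases h3 : ω ∈ {ω' | st v ω' ≤ u}
          · have hin : ω ∈ B ∩ {ω' | st v ω' ≤ u} := ⟨h2, h3⟩
            rw [Set.indicator_of_mem h2, Set.indicator_of_mem h3, hfdef,
              Set.indicator_of_mem hin]
            ring
          · have hnotin : ω ∉ B ∩ {ω' | st v ω' ≤ u} := fun h => h3 h.2
            rw [Set.indicator_of_mem h2, Set.indicator_of_notMem h3, hfdef,
              Set.indicator_of_notMem hnotin]
            ring
        · have hnotin : ω ∉ B ∩ {ω' | st v ω' ≤ u} := fun h => h2 h.1
          rw [Set.indicator_of_notMem h2, hfdef,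
            Set.indicator_of_notMem hnotin]
          ring
      have hfk : Integrable (fun ω => f ω * k v ω) P := by
        have h1 : Integrable (fun ω => Set.indicator B
            (fun ω' => Set.indicator {ω' | st v ω' ≤ u} (fun ω'' => k v ω'' * Y v ω'') ω') ω) P :=
          (hint v hv).indicator (ℱ.le v _ hB)
        exact h1.congr (ae_of_all _ hpt)
      obtain ⟨hXf_int, hXf_eq⟩ := aux_pull (ℱ.le v) (hXint v) (hX0 v) (hkver v) hf_meas hfk
      have hsmul_ae : (fun ω => ((ρ ω).toNNReal : NNReal)
            • (Set.indicator B (fun _ => (1 : ℝ)) ω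
              * (Y v ω * Set.indicator Su (fun _ => (1 : ℝ)) ω)))
          =ᵐ[P] fun ω => f ω
            * (ρ ω * Set.indicator {ω' | σ ω' ≤ (v : ENNReal)} (fun _ => (1 : ℝ)) ω) := by
        filter_upwards [hAE v hv] with ω hω
        rw [NNReal.smul_def, Real.coe_toNNReal _ (hρ0 ω), smul_eq_mul, hω, hfdef]
        by_cases h2 : ω ∈ B
        · by_cases h3 : ω ∈ {ω' | st v ω' ≤ u}
          · have hin : ω ∈ B ∩ {ω' | st v ω' ≤ u} := ⟨h2, h3⟩
            rw [Set.indicator_of_mem h2, Set.indicator_of_mem h3,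
              Set.indicator_of_mem hin]
            ring
          · have hnotin : ω ∉ B ∩ {ω' | st v ω' ≤ u} := fun h => h3 h.2
            rw [Set.indicator_of_mem h2, Set.indicator_of_notMem h3,
              Set.indicator_of_notMem hnotin]
            ring
        · have hnotin : ω ∉ B ∩ {ω' | st v ω' ≤ u} := fun h => h2 h.1
          rw [Set.indicator_of_notMem h2, Set.indicator_of_notMem hnotin]
          ring
      constructor
      · rw [hQd, integrable_withDensity_iff_integrable_smul₀ hρnn]
        exact hXf_int.congr hsmul_ae.symm
      · calc ∫ ω, Set.indicator B (fun _ => (1 : ℝ)) ω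
              * (Y v ω * Set.indicator Su (fun _ => (1 : ℝ)) ω) ∂Q
            = ∫ ω, ((ρ ω).toNNReal : NNReal) • (Set.indicator B (fun _ => (1 : ℝ)) ω
              * (Y v ω * Set.indicator Su (fun _ => (1 : ℝ)) ω)) ∂P := by
              rw [hQd, integral_withDensity_eq_integral_smul₀ hρnn]
          _ = ∫ ω, f ω
              * (ρ ω * Set.indicator {ω' | σ ω' ≤ (v : ENNReal)} (fun _ => (1 : ℝ)) ω) ∂P :=
              integral_congr_ae hsmul_ae
          _ = ∫ ω, f ω * k v ω ∂P := hXf_eq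
          _ = ∫ ω, Set.indicator B
              (fun ω' => Set.indicator {ω' | st v ω' ≤ u} (fun ω'' => k v ω'' * Y v ω'') ω') ω ∂P :=
              (integral_congr_ae (ae_of_all _ hpt)).symm
          _ = ∫ ω in B, Set.indicator {ω' | st v ω' ≤ u} (fun ω' => k v ω' * Y v ω') ω ∂P :=
              integral_indicator (ℱ.le v _ hB)
    -- Part 1
    have part1 : ∀ t : NNReal, u ≤ t →
        Integrable (fun ω => Y t ω * Set.indicator Su (fun _ => (1 : ℝ)) ω) Q := by
      intro t ht
      refine ((key t ht Set.univ MeasurableSet.univ).1).congr (ae_of_all _ fun ω => ?_)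
      simp
    refine ⟨part1, ?_⟩
    -- Part 2
    intro s t hs hst'
    have htu : u ≤ t := le_trans hs hst'
    have hspos : 0 < s := lt_of_lt_of_le hupos hs
    have hm_Gs : G s ≤ m := by
      rw [hG s]
      refine sup_le (ℱ.le s) (MeasurableSpace.generateFrom_le ?_)
      rintro A ⟨r, _, rfl⟩
      exact hσ measurableSet_Ioi
    haveI : SigmaFinite (Q.trim hm_Gs) := inferInstance
    haveI : SigmaFinite (P.trim (ℱ.le s)) := inferInstance
    -- matching lemma
    have hmatch : ∀ A : Set Ω, MeasurableSet[G s] A → ∃ B : Set Ω, MeasurableSet[ℱ s] B ∧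
        ∀ᵐ ω ∂P, ω ∈ Su → (ω ∈ A ↔ ω ∈ B) := by
      intro A hA
      rw [hG s, ← @MeasurableSpace.generateFrom_measurableSet Ω (ℱ s),
        MeasurableSpace.generateFrom_sup_generateFrom] at hA
      refine MeasurableSpace.generateFrom_induction _
        (fun A _ => ∃ B : Set Ω, MeasurableSet[ℱ s] B ∧
          ∀ᵐ ω ∂P, ω ∈ Su → (ω ∈ A ↔ ω ∈ B)) ?_ ?_ ?_ ?_ A hA
      · rintro A' (hA' | ⟨r, hr, rfl⟩) _
        · exact ⟨A', hA', ae_of_all _ fun ω _ => Iff.rfl⟩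
        · refine ⟨st s ⁻¹' Set.Ioi r, (hst s hspos).1 measurableSet_Ioi, ?_⟩
          filter_upwards [hne s] with ω hω hmem
          have h2 : σ ω < (s : ENNReal) :=
            lt_of_le_of_ne (le_trans (hmem : σ ω ≤ (u : ENNReal))
              (ENNReal.coe_le_coe.mpr hs)) hω
          have h3 := (hst s hspos).2 ω h2
          constructor
          · intro h5
            have : (r : ENNReal) < (st s ω : ENNReal) := by rw [← h3]; exact h5
            exact Set.mem_preimage.mpr (Set.mem_Ioi.mpr (ENNReal.coe_lt_coe.mp this))
          · intro h5
            show (r : ENNReal) < σ ω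
            rw [h3]
            exact_mod_cast Set.mem_Ioi.mp (Set.mem_preimage.mp h5)
      · exact ⟨∅, @MeasurableSet.empty _ (ℱ s), ae_of_all _ fun ω _ => Iff.rfl⟩
      · rintro A' _ ⟨B, hB, haeB⟩
        refine ⟨Bᶜ, hB.compl, ?_⟩
        filter_upwards [haeB] with ω h1 h2
        exact not_congr (h1 h2)
      · intro sq hsq hps
        choose Bn hBn haeBn using hps
        refine ⟨⋃ n, Bn n, MeasurableSet.iUnion hBn, ?_⟩
        filter_upwards [ae_all_iff.mpr haeBn] with ω h1 h2
        simp only [Set.mem_iUnion]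
        exact exists_congr fun n => h1 n h2
    -- measurability of the candidate
    have hSuGs : MeasurableSet[G s] Su := by
      have h1 : MeasurableSet[G s] {ω | (u : ENNReal) < σ ω} := by
        rw [hG s]
        exact (le_sup_right (a := (ℱ s : MeasurableSpace Ω))) _
          (MeasurableSpace.measurableSet_generateFrom ⟨u, hs, rfl⟩)
      have h2 : Su = {ω | (u : ENNReal) < σ ω}ᶜ := by
        ext ω
        simp [hSu_def, not_lt]
      rw [h2]
      exact h1.compl
    have hFsGs : (ℱ s : MeasurableSpace Ω) ≤ G s := by rw [hG s]; exact le_sup_left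
    have hgm : StronglyMeasurable[G s]
        (fun ω => Y s ω * Set.indicator Su (fun _ => (1 : ℝ)) ω) :=
      ((hYadapted s).mono hFsGs).mul (stronglyMeasurable_const.indicator hSuGs)
    -- set-integral equality
    have hg_eq : ∀ A : Set Ω, MeasurableSet[G s] A → Q A < ⊤ →
        ∫ ω in A, Y s ω * Set.indicator Su (fun _ => (1 : ℝ)) ω ∂Q
          = ∫ ω in A, Y t ω * Set.indicator Su (fun _ => (1 : ℝ)) ω ∂Q := by
      intro A hA _
      obtain ⟨B, hB, haeAB⟩ := hmatch A hA
      have hAm : MeasurableSet A := hm_Gs _ hA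
      have hsetA : ∀ w : NNReal,
          ∫ ω in A, Y w ω * Set.indicator Su (fun _ => (1 : ℝ)) ω ∂Q
            = ∫ ω, Set.indicator A (fun _ => (1 : ℝ)) ω
              * (Y w ω * Set.indicator Su (fun _ => (1 : ℝ)) ω) ∂Q := by
        intro w
        rw [← integral_indicator hAm]
        refine integral_congr_ae (ae_of_all _ fun ω => ?_)
        by_cases hA' : ω ∈ A
        · simp [Set.indicator_of_mem hA']
        · simp [Set.indicator_of_notMem hA']
      have hind : ∀ w : NNReal,
          (fun ω => Set.indicator A (fun _ => (1 : ℝ)) ω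
            * (Y w ω * Set.indicator Su (fun _ => (1 : ℝ)) ω))
          =ᵐ[Q] (fun ω => Set.indicator B (fun _ => (1 : ℝ)) ω
            * (Y w ω * Set.indicator Su (fun _ => (1 : ℝ)) ω)) := by
        intro w
        refine Filter.Eventually.filter_mono hQP.ae_le ?_
        filter_upwards [haeAB] with ω h1
        by_cases hSu' : ω ∈ Su
        · have h2 := h1 hSu'
          by_cases hA' : ω ∈ A
          · rw [Set.indicator_of_mem hA', Set.indicator_of_mem (h2.mp hA')]
          · rw [Set.indicator_of_notMem hA',
              Set.indicator_of_notMem (fun hB' => hA' (h2.mpr hB'))]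
        · rw [Set.indicator_of_notMem hSu', mul_zero, mul_zero, mul_zero]
      have h3 : ∫ ω in B, Set.indicator {ω' | st t ω' ≤ u} (fun ω' => k t ω' * Y t ω') ω ∂P
          = ∫ ω in B, Set.indicator {ω' | st s ω' ≤ u} (fun ω' => k s ω' * Y s ω') ω ∂P := by
        rw [← setIntegral_condExp (ℱ.le s) (hint t htu) hB]
        exact integral_congr_ae (ae_restrict_of_ae (hmart s t hs hst'))
      calc ∫ ω in A, Y s ω * Set.indicator Su (fun _ => (1 : ℝ)) ω ∂Q
          = ∫ ω, Set.indicator A (fun _ => (1 : ℝ)) ω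
            * (Y s ω * Set.indicator Su (fun _ => (1 : ℝ)) ω) ∂Q := hsetA s
        _ = ∫ ω, Set.indicator B (fun _ => (1 : ℝ)) ω
            * (Y s ω * Set.indicator Su (fun _ => (1 : ℝ)) ω) ∂Q := integral_congr_ae (hind s)
        _ = ∫ ω in B, Set.indicator {ω' | st s ω' ≤ u} (fun ω' => k s ω' * Y s ω') ω ∂P :=
            (key s hs B hB).2
        _ = ∫ ω in B, Set.indicator {ω' | st t ω' ≤ u} (fun ω' => k t ω' * Y t ω') ω ∂P := h3.symm
        _ = ∫ ω, Set.indicator B (fun _ => (1 : ℝ)) ω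
            * (Y t ω * Set.indicator Su (fun _ => (1 : ℝ)) ω) ∂Q :=
            ((key t htu B (ℱ.mono hst' _ hB)).2).symm
        _ = ∫ ω, Set.indicator A (fun _ => (1 : ℝ)) ω
            * (Y t ω * Set.indicator Su (fun _ => (1 : ℝ)) ω) ∂Q :=
            (integral_congr_ae (hind t)).symm
        _ = ∫ ω in A, Y t ω * Set.indicator Su (fun _ => (1 : ℝ)) ω ∂Q := (hsetA t).symm
    exact (ae_eq_condExp_of_forall_setIntegral_eq hm_Gs (part1 t htu)
      (fun A _ _ => (part1 s hs).integrableOn)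
      hg_eq hgm.aestronglyMeasurable).symm
end

section
/- Let Q be a probability measure, (G_t)_{t≥0} a filtration, and σ a (G_t)-stopping time with Q(σ < ∞) = 1. Let Y : [0,∞) × Ω → ℝ be a bounded, (G_t)-progressively measurable process with right-continuous sample paths. Assume that for every u > 0 the process t ↦ 1_{σ≤u}·(Y_{t∨u} − Y_u) is a (Q, G_t)-martingale. Then the process t ↦ Y_{t∨σ} − Y_σ (where Y_{t∨σ}(ω) := Y_{max(t,σ(ω))}(ω) and Y_σ(ω) := Y_{σ(ω)}(ω)) is a (Q, G_t)-martingale. -/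
open MeasureTheory Filter

section AuxStmt16

variable {Ω : Type*} {m : MeasurableSpace Ω}

/-- The `k`-th level set of the discretized stopping time: `{σ ≤ δ}` for `k = 1` and
`{(k-1)δ < σ ≤ kδ}` for `k ≥ 2`. -/
def stmt16gset (σ : Ω → ENNReal) (δ : NNReal) (k : ℕ) : Set Ω :=
  if k = 1 then {ω | σ ω ≤ (δ : ENNReal)}
  else {ω | ((((k - 1 : ℕ) : NNReal) * δ : NNReal) : ENNReal) < σ ω ∧
        σ ω ≤ (((k : NNReal) * δ : NNReal) : ENNReal)}

/-- The discretized index: the index `k ≥ 1` such that `σ ω ∈ stmt16gset σ δ k`. -/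
noncomputable def stmt16kstar (σ : Ω → ENNReal) (δ : NNReal) (ω : Ω) : ℕ :=
  max ⌈(σ ω).toNNReal / δ⌉₊ 1

/-- The discretization of `σ` from above along the grid `δ·ℕ`. -/
noncomputable def stmt16sigma' (σ : Ω → ENNReal) (δ : NNReal) (ω : Ω) : NNReal :=
  (stmt16kstar σ δ ω : NNReal) * δ

lemma stmt16_uniq {δ : NNReal} (hδ : 0 < δ) {a : NNReal} {k c : ℕ}
    (hk1 : 1 ≤ k) (hc1 : 1 ≤ c)
    (hk : a ≤ (k : NNReal) * δ ∧ (k = 1 ∨ (((k - 1 : ℕ) : NNReal)) * δ < a))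
    (hc : a ≤ (c : NNReal) * δ ∧ (c = 1 ∨ (((c - 1 : ℕ) : NNReal)) * δ < a)) : k = c := by
  by_contra hne
  rcases Nat.lt_or_ge k c with hkc | hge
  · have hc2 : c ≠ 1 := by omega
    have hlow := hc.2.resolve_left hc2
    have hcast : (k : NNReal) ≤ ((c - 1 : ℕ) : NNReal) := Nat.cast_le.2 (by omega)
    have h : a ≤ ((c - 1 : ℕ) : NNReal) * δ :=
      hk.1.trans (mul_le_mul_left hcast δ)
    exact absurd (hlow.trans_le h) (lt_irrefl _)
  · have hck : c < k := lt_of_le_of_ne hge (by omega)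
    have hk2 : k ≠ 1 := by omega
    have hlow := hk.2.resolve_left hk2
    have hcast : (c : NNReal) ≤ ((k - 1 : ℕ) : NNReal) := Nat.cast_le.2 (by omega)
    have h : a ≤ ((k - 1 : ℕ) : NNReal) * δ :=
      hc.1.trans (mul_le_mul_left hcast δ)
    exact absurd (hlow.trans_le h) (lt_irrefl _)

lemma stmt16kstar_pos (σ : Ω → ENNReal) (δ : NNReal) (ω : Ω) :
    1 ≤ stmt16kstar σ δ ω := le_max_right _ _

lemma stmt16_sat_kstar {σ : Ω → ENNReal} {δ : NNReal} (hδ : 0 < δ) (ω : Ω) :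
    (σ ω).toNNReal ≤ (stmt16kstar σ δ ω : NNReal) * δ ∧
      (stmt16kstar σ δ ω = 1 ∨
        (((stmt16kstar σ δ ω - 1 : ℕ) : NNReal)) * δ < (σ ω).toNNReal) := by
  have hcdef : stmt16kstar σ δ ω = max ⌈(σ ω).toNNReal / δ⌉₊ 1 := rfl
  constructor
  · have h1 : (σ ω).toNNReal / δ ≤ ((stmt16kstar σ δ ω : ℕ) : NNReal) :=
      (Nat.le_ceil _).trans (Nat.cast_le.2 (by rw [hcdef]; exact le_max_left _ _))
    exact (div_le_iff₀ hδ).1 h1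
  · by_cases hc1 : stmt16kstar σ δ ω = 1
    · exact Or.inl hc1
    · right
      have h2 : (stmt16kstar σ δ ω - 1 : ℕ) < ⌈(σ ω).toNNReal / δ⌉₊ := by
        rw [hcdef] at hc1 ⊢; omega
      have h3 : ((stmt16kstar σ δ ω - 1 : ℕ) : NNReal) < (σ ω).toNNReal / δ :=
        Nat.lt_ceil.1 h2
      exact (lt_div_iff₀ hδ).1 h3

lemma stmt16_mem_iff {σ : Ω → ENNReal} {δ : NNReal} (hδ : 0 < δ) {ω : Ω}
    (hω : σ ω ≠ ⊤) {k : ℕ} (hk : 1 ≤ k) :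
    ω ∈ stmt16gset σ δ k ↔ k = stmt16kstar σ δ ω := by
  have hσa : σ ω = (((σ ω).toNNReal : NNReal) : ENNReal) := (ENNReal.coe_toNNReal hω).symm
  have hsat := stmt16_sat_kstar (σ := σ) hδ ω
  constructor
  · intro hmem
    refine stmt16_uniq hδ hk (stmt16kstar_pos σ δ ω) ?_ hsat
    by_cases hk1 : k = 1
    · subst hk1
      unfold stmt16gset at hmem
      rw [if_pos rfl] at hmem
      rw [Set.mem_setOf_eq, hσa, ENNReal.coe_le_coe] at hmem
      exact ⟨by simpa using hmem, Or.inl rfl⟩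
    · unfold stmt16gset at hmem
      rw [if_neg hk1] at hmem
      rw [Set.mem_setOf_eq, hσa, ENNReal.coe_le_coe, ENNReal.coe_lt_coe] at hmem
      exact ⟨hmem.2, Or.inr hmem.1⟩
  · intro hkeq
    have hsatk : (σ ω).toNNReal ≤ (k : NNReal) * δ ∧
        (k = 1 ∨ (((k - 1 : ℕ) : NNReal)) * δ < (σ ω).toNNReal) := by
      rw [hkeq]; exact hsat
    by_cases hk1 : k = 1
    · unfold stmt16gset
      rw [if_pos hk1, Set.mem_setOf_eq, hσa, ENNReal.coe_le_coe]
      have h := hsatk.1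
      rw [hk1] at h
      simpa using h
    · unfold stmt16gset
      rw [if_neg hk1]
      refine Set.mem_setOf.2 ⟨?_, ?_⟩
      · rw [hσa]; exact ENNReal.coe_lt_coe.2 (hsatk.2.resolve_left hk1)
      · rw [hσa]; exact ENNReal.coe_le_coe.2 hsatk.1

lemma stmt16_sigma'_le {σ : Ω → ENNReal} {δ : NNReal} (hδ : 0 < δ) (ω : Ω) :
    stmt16sigma' σ δ ω ≤ (σ ω).toNNReal + δ := by
  have hcdef : stmt16kstar σ δ ω = max ⌈(σ ω).toNNReal / δ⌉₊ 1 := rfl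
  by_cases h0 : ⌈(σ ω).toNNReal / δ⌉₊ = 0
  · have haδ : (σ ω).toNNReal / δ = 0 := by
      have h := Nat.ceil_eq_zero.1 h0
      simpa using h
    have ha0 : (σ ω).toNNReal = 0 := by
      rcases div_eq_zero_iff.1 haδ with h | h
      · exact h
      · exact absurd h hδ.ne'
    have hone : stmt16kstar σ δ ω = 1 := by rw [hcdef]; omega
    rw [stmt16sigma', hone, ha0]
    simp
  · have hmax : stmt16kstar σ δ ω = ⌈(σ ω).toNNReal / δ⌉₊ := by rw [hcdef]; omega
    have h1 : ((⌈(σ ω).toNNReal / δ⌉₊ : ℕ) : NNReal) < (σ ω).toNNReal / δ + 1 :=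
      Nat.ceil_lt_add_one zero_le
    calc stmt16sigma' σ δ ω = ((⌈(σ ω).toNNReal / δ⌉₊ : ℕ) : NNReal) * δ := by
          rw [stmt16sigma', hmax]
      _ ≤ ((σ ω).toNNReal / δ + 1) * δ := mul_le_mul_left h1.le δ
      _ = (σ ω).toNNReal / δ * δ + δ := by ring
      _ = (σ ω).toNNReal + δ := by rw [div_mul_cancel₀ _ hδ.ne']

lemma stmt16_le_sigma' {σ : Ω → ENNReal} {δ : NNReal} (hδ : 0 < δ) (ω : Ω) :
    (σ ω).toNNReal ≤ stmt16sigma' σ δ ω :=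
  (stmt16_sat_kstar (σ := σ) hδ ω).1

end AuxStmt16

/-- Let `Q` be a probability measure, `(𝒢 t)` a filtration, and `σ` a
`(𝒢 t)`-stopping time with `Q(σ < ∞) = 1`.  Let `Y` be a bounded,
`(𝒢 t)`-progressively measurable process with right-continuous sample paths such that
for every `u > 0` the process `t ↦ 1_{σ≤u}·(Y_{t∨u} − Y_u)` is a `(Q, 𝒢 t)`-martingale.
Then the process `t ↦ Y_{t∨σ} − Y_σ` is a `(Q, 𝒢 t)`-martingale (up to modification on
the `Q`-null set `{σ = ∞}`, where `Y_{t∨σ} − Y_σ` is read via `σ.toNNReal`). -/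
theorem stmt_16 {Ω : Type*} {m : MeasurableSpace Ω}
    (Q : Measure Ω) [IsProbabilityMeasure Q]
    (𝒢 : Filtration NNReal m)
    (σ : Ω → ENNReal) (hσ : Measurable σ)
    (hστ : ∀ t : NNReal, MeasurableSet[𝒢 t] {ω | σ ω ≤ (t : ENNReal)})
    (hσfin : ∀ᵐ ω ∂Q, σ ω ≠ ⊤)
    (Y : NNReal → Ω → ℝ)
    (hbdd : ∃ C : ℝ, ∀ t ω, |Y t ω| ≤ C)
    (hprog : ProgMeasurable 𝒢 Y)
    (hrc : ∀ ω, ∀ t : NNReal, ContinuousWithinAt (fun s => Y s ω) (Set.Ici t) t)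
    (hmart : ∀ u : NNReal, 0 < u →
      Martingale (fun t ω => Set.indicator {ω' | σ ω' ≤ (u : ENNReal)}
        (fun ω' => Y (max t u) ω' - Y u ω') ω) 𝒢 Q) :
    ∃ V : NNReal → Ω → ℝ,
      (∀ t : NNReal,
        V t =ᵐ[Q] fun ω => Y (max t (σ ω).toNNReal) ω - Y ((σ ω).toNNReal) ω) ∧
      Martingale V 𝒢 Q := by
  obtain ⟨C, hC⟩ := hbdd
  -- the grid widths
  set δ : ℕ → NNReal := fun n => ((n : NNReal) + 1)⁻¹ with hδdef
  have hδpos : ∀ n, 0 < δ n := fun n => by positivity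
  have hδ0 : Tendsto δ atTop (nhds 0) := by
    rw [← NNReal.tendsto_coe]
    have hco : ∀ n : ℕ, ((δ n : NNReal) : ℝ) = 1 / ((n : ℝ) + 1) := by
      intro n
      rw [hδdef]
      push_cast
      rw [one_div]
    simp only [hco, NNReal.coe_zero]
    exact tendsto_one_div_add_atTop_nhds_zero_nat
  -- the pieces
  set g : ℕ → ℕ → NNReal → Ω → ℝ := fun n k t =>
    Set.indicator (stmt16gset σ (δ n) k)
      (fun ω => Y (max t ((k : NNReal) * δ n)) ω - Y ((k : NNReal) * δ n) ω) with hgdef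
  -- target processes
  set tgt : ℕ → NNReal → Ω → ℝ := fun n t ω =>
    Y (max t (stmt16sigma' σ (δ n) ω)) ω - Y (stmt16sigma' σ (δ n) ω) ω with htgtdef
  set tgt' : NNReal → Ω → ℝ := fun t ω =>
    Y (max t (σ ω).toNNReal) ω - Y ((σ ω).toNNReal) ω with htgt'def
  -- strong measurability of the pieces
  have hYsm : ∀ t : NNReal, StronglyMeasurable (Y t) := fun t =>
    (IsStronglyProgressive.stronglyAdapted hprog t).mono (𝒢.le t)
  have hgsetmeas : ∀ n k, MeasurableSet (stmt16gset σ (δ n) k) := by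
    intro n k
    unfold stmt16gset
    split
    · exact hσ measurableSet_Iic
    · exact (hσ measurableSet_Ioi).inter (hσ measurableSet_Iic)
  have hgsm : ∀ n k t, StronglyMeasurable (g n k t) := by
    intro n k t
    exact ((hYsm _).sub (hYsm _)).indicator (hgsetmeas n k)
  -- partial sums
  set Sp : ℕ → ℕ → NNReal → Ω → ℝ := fun n K t ω =>
    ∑ k ∈ Finset.Icc 1 K, g n k t ω with hSpdef
  have hSpsm : ∀ n K t, StronglyMeasurable (Sp n K t) := by
    intro n K t
    exact Finset.stronglyMeasurable_fun_sum _ fun k _ => hgsm n k t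
  -- pointwise computation of the pieces
  have hgpt : ∀ n t, ∀ {ω}, σ ω ≠ ⊤ → ∀ k, 1 ≤ k →
      g n k t ω = if k = stmt16kstar σ (δ n) ω then tgt n t ω else 0 := by
    intro n t ω hω k hk
    by_cases hmem : ω ∈ stmt16gset σ (δ n) k
    · have hkeq : k = stmt16kstar σ (δ n) ω := (stmt16_mem_iff (hδpos n) hω hk).1 hmem
      rw [if_pos hkeq]
      simp only [hgdef, htgtdef, stmt16sigma']
      rw [Set.indicator_of_mem hmem, hkeq]
    · have hkne : k ≠ stmt16kstar σ (δ n) ω := fun hkeq =>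
        hmem ((stmt16_mem_iff (hδpos n) hω hk).2 hkeq)
      rw [if_neg hkne]
      simp only [hgdef, Set.indicator_of_notMem hmem]
  -- pointwise computation of the partial sums
  have hSppt : ∀ n K t, ∀ {ω}, σ ω ≠ ⊤ →
      Sp n K t ω = if stmt16kstar σ (δ n) ω ∈ Finset.Icc 1 K then tgt n t ω else 0 := by
    intro n K t ω hω
    simp only [hSpdef]
    have hco : ∀ k ∈ Finset.Icc 1 K, g n k t ω =
        if k = stmt16kstar σ (δ n) ω then tgt n t ω else 0 := fun k hkmem =>
      hgpt n t hω k (Finset.mem_Icc.1 hkmem).1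
    rw [Finset.sum_congr rfl hco, Finset.sum_ite_eq' (Finset.Icc 1 K) _ (fun _ => tgt n t ω)]
  -- bounds
  have htgtbdd : ∀ n t ω, |tgt n t ω| ≤ C + C := by
    intro n t ω
    simp only [htgtdef]
    exact (abs_sub _ _).trans (add_le_add (hC _ ω) (hC _ ω))
  have hSpbdd : ∀ n K t, ∀ {ω}, σ ω ≠ ⊤ → |Sp n K t ω| ≤ C + C := by
    intro n K t ω hω
    rw [hSppt n K t hω]
    split
    · exact htgtbdd n t ω
    · rw [abs_zero]
      have h := (abs_nonneg (tgt n t ω)).trans (htgtbdd n t ω)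
      linarith
  -- pointwise convergence of partial sums to tgt n
  have hSptendsto : ∀ n t, ∀ {ω}, σ ω ≠ ⊤ →
      Tendsto (fun K => Sp n K t ω) atTop (nhds (tgt n t ω)) := by
    intro n t ω hω
    have hev : (fun K => Sp n K t ω) =ᶠ[atTop] fun _ => tgt n t ω := by
      filter_upwards [eventually_ge_atTop (stmt16kstar σ (δ n) ω)] with K hK
      rw [hSppt n K t hω, if_pos (Finset.mem_Icc.2 ⟨stmt16kstar_pos σ (δ n) ω, hK⟩)]
    exact Tendsto.congr' hev.symm tendsto_const_nhds
  -- a.e. strong measurability of tgt n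
  have htgtmeas : ∀ n t, AEStronglyMeasurable (tgt n t) Q := by
    intro n t
    refine aestronglyMeasurable_of_tendsto_ae atTop
      (fun K => (hSpsm n K t).aestronglyMeasurable) ?_
    filter_upwards [hσfin] with ω hω using hSptendsto n t hω
  -- pointwise convergence tgt n → tgt'
  have htgttendsto : ∀ t, ∀ {ω}, σ ω ≠ ⊤ →
      Tendsto (fun n => tgt n t ω) atTop (nhds (tgt' t ω)) := by
    intro t ω hω
    have hlow : ∀ n, (σ ω).toNNReal ≤ stmt16sigma' σ (δ n) ω := fun n =>
      stmt16_le_sigma' (hδpos n) ω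
    have hup : ∀ n, stmt16sigma' σ (δ n) ω ≤ (σ ω).toNNReal + δ n := fun n =>
      stmt16_sigma'_le (hδpos n) ω
    have haδ : Tendsto (fun n => (σ ω).toNNReal + δ n) atTop (nhds ((σ ω).toNNReal)) := by
      have h := Tendsto.const_add ((σ ω).toNNReal) hδ0
      simpa using h
    have hσ'tendsto : Tendsto (fun n => stmt16sigma' σ (δ n) ω) atTop
        (nhds ((σ ω).toNNReal)) :=
      tendsto_of_tendsto_of_tendsto_of_le_of_le tendsto_const_nhds haδ hlow hup
    have hσ'w : Tendsto (fun n => stmt16sigma' σ (δ n) ω) atTop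
        (nhdsWithin ((σ ω).toNNReal) (Set.Ici ((σ ω).toNNReal))) :=
      tendsto_nhdsWithin_of_tendsto_nhds_of_eventually_within _ hσ'tendsto
        (Eventually.of_forall hlow)
    have h1 : Tendsto (fun n => Y (stmt16sigma' σ (δ n) ω) ω) atTop
        (nhds (Y ((σ ω).toNNReal) ω)) :=
      (hrc ω ((σ ω).toNNReal)).tendsto.comp hσ'w
    have hmaxt : Tendsto (fun n => max t (stmt16sigma' σ (δ n) ω)) atTop
        (nhdsWithin (max t ((σ ω).toNNReal)) (Set.Ici (max t ((σ ω).toNNReal)))) := by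
      refine tendsto_nhdsWithin_of_tendsto_nhds_of_eventually_within _
        (tendsto_const_nhds.max hσ'tendsto) (Eventually.of_forall fun n => ?_)
      exact max_le_max le_rfl (hlow n)
    have h2 : Tendsto (fun n => Y (max t (stmt16sigma' σ (δ n) ω)) ω) atTop
        (nhds (Y (max t ((σ ω).toNNReal)) ω)) :=
      (hrc ω (max t ((σ ω).toNNReal))).tendsto.comp hmaxt
    simp only [htgtdef, htgt'def]
    exact h2.sub h1
  -- integrability of the pieces
  have hgint : ∀ n k t, Integrable (g n k t) Q := by
    intro n k t
    refine Integrable.mono' (integrable_const (C + C)) (hgsm n k t).aestronglyMeasurable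
      (Eventually.of_forall fun ω => ?_)
    rw [Real.norm_eq_abs]
    simp only [hgdef]
    by_cases hmem : ω ∈ stmt16gset σ (δ n) k
    · rw [Set.indicator_of_mem hmem]
      exact (abs_sub _ _).trans (add_le_add (hC _ ω) (hC _ ω))
    · rw [Set.indicator_of_notMem hmem, abs_zero]
      have h := (abs_nonneg (Y t ω)).trans (hC t ω)
      linarith
  -- set-integral equality for each piece
  have hgsetint : ∀ n k, 1 ≤ k → ∀ s t : NNReal, s ≤ t → ∀ A : Set Ω,
      MeasurableSet[𝒢 s] A → ∫ ω in A, g n k t ω ∂Q = ∫ ω in A, g n k s ω ∂Q := by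
    intro n k hk s t hst A hA
    by_cases hk1 : k = 1
    · subst hk1
      have hmem : stmt16gset σ (δ n) 1 = {ω' | σ ω' ≤ ((δ n : NNReal) : ENNReal)} := by
        unfold stmt16gset; rw [if_pos rfl]
      have heq : ∀ r : NNReal, g n 1 r = fun ω => Set.indicator
          {ω' | σ ω' ≤ ((δ n : NNReal) : ENNReal)}
          (fun ω' => Y (max r (δ n)) ω' - Y (δ n) ω') ω := by
        intro r
        simp only [hgdef, Nat.cast_one, one_mul, hmem]
      rw [heq t, heq s]
      exact ((hmart (δ n) (hδpos n)).setIntegral_eq hst hA).symm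
    · -- k ≥ 2
      set u : NNReal := ((k - 1 : ℕ) : NNReal) * δ n with hudef
      set v : NNReal := (k : NNReal) * δ n with hvdef
      have hu : 0 < u := by
        rw [hudef]
        have hkc : (0 : NNReal) < ((k - 1 : ℕ) : NNReal) := by
          exact_mod_cast Nat.pos_of_ne_zero (by omega)
        exact mul_pos hkc (hδpos n)
      have huv : u ≤ v := by
        rw [hudef, hvdef]
        exact mul_le_mul_left (Nat.cast_le.2 (by omega)) _
      set M : NNReal → NNReal → Ω → ℝ := fun w r ω => Set.indicator
        {ω' | σ ω' ≤ ((w : NNReal) : ENNReal)}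
        (fun ω' => Y (max r w) ω' - Y w ω') ω with hMdef
      have hMmart : ∀ w : NNReal, 0 < w → Martingale (fun r => M w r) 𝒢 Q := by
        intro w hw
        exact hmart w hw
      have hv : 0 < v := hu.trans_le huv
      have hgM : ∀ r : NNReal, ∀ ω, g n k r ω = M v r ω - M u (max r v) ω + M u v ω := by
        intro r ω
        have hgsetk : stmt16gset σ (δ n) k =
            {ω' | ((u : NNReal) : ENNReal) < σ ω' ∧ σ ω' ≤ ((v : NNReal) : ENNReal)} := by
          unfold stmt16gset
          rw [if_neg hk1]
        simp only [hgdef, hMdef, hgsetk, ← hvdef]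
        by_cases h1 : ω ∈ {ω' | σ ω' ≤ ((u : NNReal) : ENNReal)}
        · have h1' : σ ω ≤ ((u : NNReal) : ENNReal) := h1
          have h2 : ω ∈ {ω' | σ ω' ≤ ((v : NNReal) : ENNReal)} :=
            Set.mem_setOf.2 (h1'.trans (ENNReal.coe_le_coe.2 huv))
          have hnot : ω ∉ {ω' | ((u : NNReal) : ENNReal) < σ ω' ∧
              σ ω' ≤ ((v : NNReal) : ENNReal)} := fun h => absurd h.1 (not_lt.2 h1')
          rw [Set.indicator_of_notMem hnot, Set.indicator_of_mem h2,
            Set.indicator_of_mem h1, Set.indicator_of_mem h1]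
          have hmr : max (max r v) u = max r v := max_eq_left (huv.trans (le_max_right r v))
          have hmv : max v u = v := max_eq_left huv
          rw [hmr, hmv]
          ring
        · by_cases h2 : ω ∈ {ω' | σ ω' ≤ ((v : NNReal) : ENNReal)}
          · have hmem : ω ∈ {ω' | ((u : NNReal) : ENNReal) < σ ω' ∧
                σ ω' ≤ ((v : NNReal) : ENNReal)} :=
              Set.mem_setOf.2 ⟨not_le.1 (fun hle => h1 (Set.mem_setOf.2 hle)),
                Set.mem_setOf.1 h2⟩
            rw [Set.indicator_of_mem hmem, Set.indicator_of_mem h2,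
              Set.indicator_of_notMem h1, Set.indicator_of_notMem h1]
            ring
          · have hnot : ω ∉ {ω' | ((u : NNReal) : ENNReal) < σ ω' ∧
                σ ω' ≤ ((v : NNReal) : ENNReal)} := fun h => absurd h.2 h2
            rw [Set.indicator_of_notMem hnot, Set.indicator_of_notMem h2,
              Set.indicator_of_notMem h1, Set.indicator_of_notMem h1]
            ring
      have hMint : ∀ w : NNReal, 0 < w → ∀ r, IntegrableOn (M w r) A Q := by
        intro w hw r
        exact ((hMmart w hw).integrable r).integrableOn
      have hsplit : ∀ r : NNReal, ∫ ω in A, g n k r ω ∂Q =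
          ∫ ω in A, M v r ω ∂Q - ∫ ω in A, M u (max r v) ω ∂Q +
          ∫ ω in A, M u v ω ∂Q := by
        intro r
        have hcong : ∫ ω in A, g n k r ω ∂Q =
            ∫ ω in A, (M v r ω - M u (max r v) ω + M u v ω) ∂Q :=
          setIntegral_congr_fun (𝒢.le s A hA) (fun ω _ => hgM r ω)
        have i1 : IntegrableOn (fun ω => M v r ω - M u (max r v) ω) A Q :=
          (hMint v hv r).sub (hMint u hu (max r v))
        calc ∫ ω in A, g n k r ω ∂Q
            = ∫ ω in A, (M v r ω - M u (max r v) ω + M u v ω) ∂Q := hcong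
          _ = (∫ ω in A, (M v r ω - M u (max r v) ω) ∂Q) + ∫ ω in A, M u v ω ∂Q :=
              integral_add i1 (hMint u hu v)
          _ = (∫ ω in A, M v r ω ∂Q - ∫ ω in A, M u (max r v) ω ∂Q) +
              ∫ ω in A, M u v ω ∂Q := by
              rw [integral_sub (hMint v hv r) (hMint u hu (max r v))]
          _ = ∫ ω in A, M v r ω ∂Q - ∫ ω in A, M u (max r v) ω ∂Q +
              ∫ ω in A, M u v ω ∂Q := rfl
      rw [hsplit t, hsplit s]
      have e1 : ∫ ω in A, M v t ω ∂Q = ∫ ω in A, M v s ω ∂Q :=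
        ((hMmart v hv).setIntegral_eq hst hA).symm
      have e2 : ∫ ω in A, M u (max t v) ω ∂Q = ∫ ω in A, M u (max s v) ω ∂Q := by
        have hA' : MeasurableSet[𝒢 (max s v)] A := 𝒢.mono (le_max_left s v) A hA
        exact ((hMmart u hu).setIntegral_eq (max_le_max hst le_rfl) hA').symm
      rw [e1, e2]
  -- set-integral equality for tgt'
  have hkey : ∀ s t : NNReal, s ≤ t → ∀ A : Set Ω, MeasurableSet[𝒢 s] A →
      ∫ ω in A, tgt' t ω ∂Q = ∫ ω in A, tgt' s ω ∂Q := by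
    intro s t hst A hA
    have hSpeq : ∀ n K, ∫ ω in A, Sp n K t ω ∂Q = ∫ ω in A, Sp n K s ω ∂Q := by
      intro n K
      simp only [hSpdef]
      rw [integral_finset_sum _ (fun k _ => (hgint n k t).integrableOn),
        integral_finset_sum _ (fun k _ => (hgint n k s).integrableOn)]
      exact Finset.sum_congr rfl fun k hkmem =>
        hgsetint n k (Finset.mem_Icc.1 hkmem).1 s t hst A hA
    have htgteq : ∀ n, ∫ ω in A, tgt n t ω ∂Q = ∫ ω in A, tgt n s ω ∂Q := by
      intro n
      have hconv : ∀ r : NNReal, Tendsto (fun K => ∫ ω in A, Sp n K r ω ∂Q) atTop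
          (nhds (∫ ω in A, tgt n r ω ∂Q)) := by
        intro r
        refine tendsto_integral_of_dominated_convergence (fun _ => C + C)
          (fun K => (hSpsm n K r).aestronglyMeasurable.restrict)
          (integrable_const _) (fun K => ?_) ?_
        · filter_upwards [ae_restrict_of_ae hσfin] with ω hω
          rw [Real.norm_eq_abs]
          exact hSpbdd n K r hω
        · filter_upwards [ae_restrict_of_ae hσfin] with ω hω
          exact hSptendsto n r hω
      have h2 : Tendsto (fun K => ∫ ω in A, Sp n K t ω ∂Q) atTop
          (nhds (∫ ω in A, tgt n s ω ∂Q)) :=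
        (hconv s).congr fun K => (hSpeq n K).symm
      exact tendsto_nhds_unique (hconv t) h2
    have hconv' : ∀ r : NNReal, Tendsto (fun n => ∫ ω in A, tgt n r ω ∂Q) atTop
        (nhds (∫ ω in A, tgt' r ω ∂Q)) := by
      intro r
      refine tendsto_integral_of_dominated_convergence (fun _ => C + C)
        (fun n => (htgtmeas n r).restrict)
        (integrable_const _) (fun n => ?_) ?_
      · filter_upwards with ω
        rw [Real.norm_eq_abs]
        exact htgtbdd n r ω
      · filter_upwards [ae_restrict_of_ae hσfin] with ω hω
        exact htgttendsto r hω
    have h2 : Tendsto (fun n => ∫ ω in A, tgt n t ω ∂Q) atTop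
        (nhds (∫ ω in A, tgt' s ω ∂Q)) :=
      (hconv' s).congr fun n => (htgteq n).symm
    exact tendsto_nhds_unique (hconv' t) h2
  -- construct the adapted version V via the stopped value at σ ∧ t
  set τ : NNReal → Ω → NNReal := fun t ω =>
    if σ ω ≤ (t : ENNReal) then (σ ω).toNNReal else t with hτdef
  have hτst : ∀ t, IsStoppingTime 𝒢 (fun ω => (τ t ω : WithTop NNReal)) := by
    intro t s
    simp only [WithTop.coe_le_coe]
    by_cases hts : t ≤ s
    · have huniv : {ω | τ t ω ≤ s} = Set.univ := by
        ext ω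
        simp only [Set.mem_setOf_eq, Set.mem_univ, iff_true, hτdef]
        split
        · rename_i h
          have hωfin : σ ω ≠ ⊤ := fun hc => by simp [hc] at h
          have hle : (σ ω).toNNReal ≤ t := by
            rw [← ENNReal.coe_le_coe, ENNReal.coe_toNNReal hωfin]
            exact h
          exact hle.trans hts
        · exact hts
      rw [huniv]
      exact MeasurableSet.univ
    · have hst : s < t := not_le.1 hts
      have hset : {ω | τ t ω ≤ s} = {ω | σ ω ≤ (s : ENNReal)} := by
        ext ω
        simp only [Set.mem_setOf_eq, hτdef]
        split
        · rename_i h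
          have hωfin : σ ω ≠ ⊤ := fun hc => by simp [hc] at h
          rw [← ENNReal.coe_le_coe, ENNReal.coe_toNNReal hωfin]
        · rename_i h
          constructor
          · intro hts'
            exact absurd hts' hts
          · intro hσs
            exact absurd (hσs.trans (ENNReal.coe_le_coe.2 hst.le)) h
      rw [hset]
      exact hστ s
  have hτle : ∀ t ω, τ t ω ≤ t := by
    intro t ω
    simp only [hτdef]
    split
    · rename_i h
      have hωfin : σ ω ≠ ⊤ := fun hc => by simp [hc] at h
      rw [← ENNReal.coe_le_coe, ENNReal.coe_toNNReal hωfin]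
      exact h
    · exact le_rfl
  set V : NNReal → Ω → ℝ := fun t ω => Y t ω - stoppedValue Y (fun ω => (τ t ω : WithTop NNReal)) ω with hVdef
  have hVadapted : ∀ t, StronglyMeasurable[𝒢 t] (V t) :=
    fun t => (IsStronglyProgressive.stronglyAdapted hprog t).sub
      (stronglyMeasurable_stoppedValue_of_le hprog (hτst t) (fun ω => WithTop.coe_le_coe.2 (hτle t ω)))
  have hVae : ∀ t, V t =ᵐ[Q] tgt' t := by
    intro t
    filter_upwards [hσfin] with ω hω
    simp only [hVdef, htgt'def, stoppedValue, WithTop.untopA, WithTop.untopD_coe]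
    by_cases hles : σ ω ≤ (t : ENNReal)
    · have ha : (σ ω).toNNReal ≤ t := by
        rw [← ENNReal.coe_le_coe, ENNReal.coe_toNNReal hω]
        exact hles
      simp only [hτdef, if_pos hles, max_eq_left ha]
    · have ht : t ≤ (σ ω).toNNReal := by
        rw [← ENNReal.coe_le_coe, ENNReal.coe_toNNReal hω]
        exact (not_le.1 hles).le
      simp only [hτdef, if_neg hles, max_eq_right ht, sub_self]
  have hVint : ∀ t, Integrable (V t) Q := by
    intro t
    refine Integrable.mono' (integrable_const (C + C))
      ((hVadapted t).mono (𝒢.le t)).aestronglyMeasurable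
      (Eventually.of_forall fun ω => ?_)
    rw [Real.norm_eq_abs]
    simp only [hVdef]
    exact (abs_sub _ _).trans (add_le_add (hC _ ω) (hC _ ω))
  refine ⟨V, fun t => hVae t, ?_⟩
  refine ⟨hVadapted, fun s t hst => ?_⟩
  refine (ae_eq_condExp_of_forall_setIntegral_eq (𝒢.le s) (hVint t)
    (fun A hA _ => (hVint s).integrableOn) (fun A hA _ => ?_)
    ((hVadapted s).aestronglyMeasurable)).symm
  have hAmeas : MeasurableSet A := 𝒢.le s A hA
  have e1 : ∫ ω in A, V s ω ∂Q = ∫ ω in A, tgt' s ω ∂Q :=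
    setIntegral_congr_ae hAmeas ((hVae s).mono fun ω h _ => h)
  have e2 : ∫ ω in A, V t ω ∂Q = ∫ ω in A, tgt' t ω ∂Q :=
    setIntegral_congr_ae hAmeas ((hVae t).mono fun ω h _ => h)
  rw [e1, e2]
  exact (hkey s t hst A hA).symm
end
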